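/- arXiv:2410.13780 — 5 statements merged into one kernel-verified Lean document; each statement's English description precedes it below -/
import Mathlib

section
/- Let Γ₁(R) = 2·2^{−2R} − 2^{−4R} and let R* > 0 satisfy 2^{2R*} = 1 + 4 ln(2) R*. Define Γ(R) = 1 − (1 − Γ₁(R*))·R/R* for 0 ≤ R < R* and Γ(R) = Γ₁(R) for R ≥ R*. Then Γ is convex on [0,∞) and Γ(R) ≤ Γ₁(R) for all R ≥ 0; in fact Γ is the largest convex function below Γ₁ on [0,∞) (the convex lower envelope of Γ₁). -/
open Real Set

private lemma expDeriv (c : ℝ) (R : ℝ) :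
    HasDerivAt (fun R => Real.exp (-(c*R))) (-c * Real.exp (-(c*R))) R := by
  have h1 : HasDerivAt (fun R : ℝ => -(c*R)) (-c) R := by
    simpa using ((hasDerivAt_id R).const_mul c).fun_neg
  simpa [mul_comm] using h1.exp

private lemma fDeriv (c : ℝ) (R : ℝ) :
    HasDerivAt (fun R => 2 * Real.exp (-(c*R)) - Real.exp (-(c*R))^2)
      (2*c*(Real.exp (-(c*R))^2 - Real.exp (-(c*R)))) R := by
  have h1 := ((expDeriv c R).const_mul 2).fun_sub ((expDeriv c R).fun_pow 2)
  refine h1.congr_deriv ?_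
  push_cast; ring

private lemma f'Deriv (c : ℝ) (R : ℝ) :
    HasDerivAt (fun R => 2*c*(Real.exp (-(c*R))^2 - Real.exp (-(c*R))))
      (2*c^2*(Real.exp (-(c*R)) - 2*Real.exp (-(c*R))^2)) R := by
  have h1 := (((expDeriv c R).fun_pow 2).fun_sub (expDeriv c R)).const_mul (2*c)
  refine h1.congr_deriv ?_
  push_cast; ring

private lemma chord_below (c Rs t R₀ : ℝ) (hc0 : 0 < c) (hRs : 0 < Rs)
    (ht : Real.exp (-(c*Rs)) = t)
    (hER0 : Real.exp (-(c*R₀)) = 1 - t)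
    (hR00 : 0 ≤ R₀) (hR0Rs : R₀ ≤ Rs)
    (htpos : 0 < t) (ht2 : t ≤ 1/2)
    (hchord : 2*t - t^2 = 1 + (2*c*(t^2 - t)) * Rs) :
    ∀ R, 0 ≤ R → R ≤ Rs →
      1 + (2*c*(t^2-t))*R ≤ 2 * Real.exp (-(c*R)) - Real.exp (-(c*R))^2 := by
  have hlin : ∀ x : ℝ, HasDerivAt (fun R : ℝ => 1 + (2*c*(t^2-t))*R) (2*c*(t^2-t)) x := by
    intro x
    simpa using ((hasDerivAt_id x).const_mul (2*c*(t^2-t))).const_add 1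
  have hhd : ∀ x : ℝ, HasDerivAt
      (fun R => 2 * Real.exp (-(c*R)) - Real.exp (-(c*R))^2 - (1 + (2*c*(t^2-t))*R))
      (2*c*(Real.exp (-(c*x))^2 - Real.exp (-(c*x))) - 2*c*(t^2-t)) x :=
    fun x => (fDeriv c x).sub (hlin x)
  have hmono1 : MonotoneOn
      (fun R => 2 * Real.exp (-(c*R)) - Real.exp (-(c*R))^2 - (1 + (2*c*(t^2-t))*R))
      (Icc 0 R₀) := by
    apply monotoneOn_of_deriv_nonneg (convex_Icc 0 R₀)
    · exact fun x _ => (hhd x).continuousAt.continuousWithinAt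
    · exact fun x _ => (hhd x).differentiableAt.differentiableWithinAt
    · intro x hx
      rw [interior_Icc] at hx
      rw [(hhd x).deriv]
      have hE1 : 1 - t ≤ Real.exp (-(c*x)) := by
        rw [← hER0]
        exact Real.exp_le_exp.2 (by nlinarith [hx.2])
      have h3 : 0 ≤ Real.exp (-(c*x)) - t := by linarith
      have h4 : 0 ≤ Real.exp (-(c*x)) + t - 1 := by linarith
      nlinarith [mul_nonneg (mul_nonneg hc0.le h3) h4]
  have hmono2 : AntitoneOn
      (fun R => 2 * Real.exp (-(c*R)) - Real.exp (-(c*R))^2 - (1 + (2*c*(t^2-t))*R))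
      (Icc R₀ Rs) := by
    apply antitoneOn_of_deriv_nonpos (convex_Icc R₀ Rs)
    · exact fun x _ => (hhd x).continuousAt.continuousWithinAt
    · exact fun x _ => (hhd x).differentiableAt.differentiableWithinAt
    · intro x hx
      rw [interior_Icc] at hx
      rw [(hhd x).deriv]
      have hE1 : Real.exp (-(c*x)) ≤ 1 - t := by
        rw [← hER0]
        exact Real.exp_le_exp.2 (by nlinarith [hx.1])
      have hE2 : t ≤ Real.exp (-(c*x)) := by
        rw [← ht]
        exact Real.exp_le_exp.2 (by nlinarith [hx.2])
      have h3 : 0 ≤ Real.exp (-(c*x)) - t := by linarith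
      have h4 : 0 ≤ 1 - t - Real.exp (-(c*x)) := by linarith
      nlinarith [mul_nonneg (mul_nonneg hc0.le h3) h4]
  intro R hR0 hRRs
  have hval0 : (2:ℝ) * Real.exp (-(c*0)) - Real.exp (-(c*0))^2 - (1 + (2*c*(t^2-t))*0) = 0 := by
    norm_num
  have hvalRs : 2 * Real.exp (-(c*Rs)) - Real.exp (-(c*Rs))^2 - (1 + (2*c*(t^2-t))*Rs) = 0 := by
    rw [ht]; linarith [hchord]
  rcases le_total R R₀ with hcase | hcase
  · have := hmono1 (⟨le_rfl, hR00⟩ : (0:ℝ) ∈ Icc 0 R₀) (⟨hR0, hcase⟩ : R ∈ Icc 0 R₀) hR0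
    dsimp only at this
    rw [hval0] at this
    linarith
  · have := hmono2 (⟨hcase, hRRs⟩ : R ∈ Icc R₀ Rs) (⟨hR0Rs, le_rfl⟩ : Rs ∈ Icc R₀ Rs) hRRs
    dsimp only at this
    rw [hvalRs] at this
    linarith

/-- With `Γ₁(R) = 2·2^{−2R} − 2^{−4R}` and `R* > 0` the solution of `2^{2R*} = 1 + 4 ln(2) R*`,
the function `Γ` equal to the chord `1 − (1 − Γ₁(R*))·R/R*` on `[0, R*)` and to `Γ₁` on
`[R*, ∞)` is convex on `[0,∞)`, lies below `Γ₁` on `[0,∞)`, and is the largest convex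
function below `Γ₁` there (the convex lower envelope). -/
theorem Gamma_convex_envelope (Rs : ℝ) (hRs : 0 < Rs)
    (heq : (2 : ℝ) ^ (2 * Rs) = 1 + 4 * Real.log 2 * Rs)
    (Γ₁ : ℝ → ℝ) (hΓ₁ : ∀ R, Γ₁ R = 2 * (2 : ℝ) ^ (-(2 * R)) - (2 : ℝ) ^ (-(4 * R)))
    (Γ : ℝ → ℝ)
    (hΓ : ∀ R, Γ R = if R < Rs then 1 - (1 - Γ₁ Rs) * R / Rs else Γ₁ R) :
    ConvexOn ℝ (Set.Ici (0 : ℝ)) Γ ∧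
      (∀ R : ℝ, 0 ≤ R → Γ R ≤ Γ₁ R) ∧
      (∀ g : ℝ → ℝ, ConvexOn ℝ (Set.Ici (0 : ℝ)) g → (∀ R : ℝ, 0 ≤ R → g R ≤ Γ₁ R) →
        ∀ R : ℝ, 0 ≤ R → g R ≤ Γ R) := by
  have hlog : 0 < Real.log 2 := Real.log_pos one_lt_two
  set c : ℝ := 2 * Real.log 2 with hc
  have hc0 : 0 < c := by rw [hc]; positivity
  have hpow : ∀ y : ℝ, (2:ℝ) ^ y = Real.exp (Real.log 2 * y) := fun y =>
    Real.rpow_def_of_pos two_pos y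
  -- exponential form of Γ₁
  have hfeq : ∀ R, Γ₁ R = 2 * Real.exp (-(c*R)) - Real.exp (-(c*R))^2 := by
    intro R
    have e1 : (2:ℝ) ^ (-(2*R)) = Real.exp (-(c*R)) := by
      rw [hpow]; congr 1; rw [hc]; ring
    have e2 : (2:ℝ) ^ (-(4*R)) = Real.exp (-(c*R))^2 := by
      rw [hpow, sq, ← Real.exp_add]; congr 1; rw [hc]; ring
    rw [hΓ₁ R, e1, e2]
  -- the defining equation in exponential form
  have heq' : Real.exp (c*Rs) = 1 + 2*(c*Rs) := by
    have h1 := heq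
    rw [hpow] at h1
    rw [show c*Rs = Real.log 2 * (2*Rs) by rw [hc]; ring, h1]
    ring
  have hkey : Real.exp (-(c*Rs)) * (1 + 2*(c*Rs)) = 1 := by
    rw [← heq', ← Real.exp_add]; simp
  have hx0 : 0 < c * Rs := mul_pos hc0 hRs
  have htpos : 0 < Real.exp (-(c*Rs)) := Real.exp_pos _
  have hineq := Real.add_one_le_exp (-(c*Rs))
  -- c Rs ≥ 1/2
  have hcRs : 1/2 ≤ c * Rs := by
    nlinarith [mul_le_mul_of_nonneg_right hineq (by positivity : (0:ℝ) ≤ 1 + 2*(c*Rs))]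
  have ht2 : Real.exp (-(c*Rs)) ≤ 1/2 := by nlinarith
  have ht1 : Real.exp (-(c*Rs)) < 1 := by nlinarith
  -- f' is monotone on [Rs, ∞)
  have hEle : ∀ R, Rs ≤ R → Real.exp (-(c*R)) ≤ Real.exp (-(c*Rs)) := fun R hR =>
    Real.exp_le_exp.2 (by nlinarith)
  have hf'mono : MonotoneOn (fun R => 2*c*(Real.exp (-(c*R))^2 - Real.exp (-(c*R)))) (Ici Rs) := by
    apply monotoneOn_of_deriv_nonneg (convex_Ici Rs)
    · exact fun x _ => (f'Deriv c x).continuousAt.continuousWithinAt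
    · exact fun x _ => (f'Deriv c x).differentiableAt.differentiableWithinAt
    · intro x hx
      rw [interior_Ici] at hx
      rw [(f'Deriv c x).deriv]
      have h1 : Real.exp (-(c*x)) ≤ 1/2 := le_trans (hEle x hx.le) ht2
      have h2 : 0 < Real.exp (-(c*x)) := Real.exp_pos _
      nlinarith [mul_nonneg (mul_nonneg (mul_pos hc0 hc0).le h2.le)
        (by linarith : (0:ℝ) ≤ 1 - 2*Real.exp (-(c*x)))]
  -- slope of the chord
  set s : ℝ := 2*c*(Real.exp (-(c*Rs))^2 - Real.exp (-(c*Rs))) with hs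
  -- chord identity: Γ₁ Rs = 1 + s Rs
  have hchord : 2 * Real.exp (-(c*Rs)) - Real.exp (-(c*Rs))^2 = 1 + s * Rs := by
    rw [hs]
    linear_combination (1 - Real.exp (-(c*Rs))) * hkey
  have hΓ₁Rs : Γ₁ Rs = 1 + s * Rs := by rw [hfeq Rs, hchord]
  -- Γ on the two pieces
  have hΓL : ∀ R, R ≤ Rs → Γ R = 1 + s * R := by
    intro R hR
    rcases lt_or_eq_of_le hR with h | h
    · rw [hΓ R, if_pos h, hΓ₁Rs]
      field_simp
      ring
    · rw [h, hΓ Rs, if_neg (lt_irrefl Rs), hΓ₁Rs]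
  have hΓf : ∀ R, Rs ≤ R → Γ R = 2 * Real.exp (-(c*R)) - Real.exp (-(c*R))^2 := by
    intro R hR
    rw [hΓ R, if_neg (not_lt.2 hR), hfeq R]
  -- Γ is differentiable with derivative (if x < Rs then s else f' x)
  have hlin : ∀ x : ℝ, HasDerivAt (fun R : ℝ => 1 + s*R) s x := by
    intro x
    simpa using ((hasDerivAt_id x).const_mul s).const_add 1
  have hΓd : ∀ x : ℝ, HasDerivAt Γ
      (if x < Rs then s else 2*c*(Real.exp (-(c*x))^2 - Real.exp (-(c*x)))) x := by
    intro x
    rcases lt_trichotomy x Rs with h | h | h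
    · rw [if_pos h]
      have hev : Γ =ᶠ[nhds x] (fun R => 1 + s*R) :=
        Filter.eventuallyEq_of_mem (Iio_mem_nhds h) (fun y hy => hΓL y (le_of_lt hy))
      exact (hlin x).congr_of_eventuallyEq hev
    · subst h
      rw [if_neg (lt_irrefl x)]
      have h1 : HasDerivWithinAt Γ s (Iic x) x :=
        ((hlin x).hasDerivWithinAt).congr (fun y hy => hΓL y hy) (hΓL x le_rfl)
      have h2 : HasDerivWithinAt Γ s (Ici x) x := by
        have h3 : HasDerivWithinAt
            (fun R => 2 * Real.exp (-(c*R)) - Real.exp (-(c*R))^2) s (Ici x) x := by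
          rw [hs]; exact (fDeriv c x).hasDerivWithinAt
        exact h3.congr (fun y hy => hΓf y hy) (hΓf x le_rfl)
      have h4 := h1.union h2
      rw [Iic_union_Ici] at h4
      exact hasDerivWithinAt_univ.1 h4
    · rw [if_neg (not_lt.2 h.le)]
      have hev : Γ =ᶠ[nhds x] (fun R => 2 * Real.exp (-(c*R)) - Real.exp (-(c*R))^2) :=
        Filter.eventuallyEq_of_mem (Ioi_mem_nhds h) (fun y hy => hΓf y (le_of_lt hy))
      exact (fDeriv c x).congr_of_eventuallyEq hev
  have hΓdiff : Differentiable ℝ Γ := fun x => (hΓd x).differentiableAt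
  -- the derivative is monotone
  have hmono : Monotone (fun x : ℝ =>
      if x < Rs then s else 2*c*(Real.exp (-(c*x))^2 - Real.exp (-(c*x)))) := by
    intro a b hab
    dsimp only
    by_cases hb : b < Rs
    · rw [if_pos (lt_of_le_of_lt hab hb), if_pos hb]
    · push_neg at hb
      rw [if_neg (not_lt.2 hb)]
      by_cases ha : a < Rs
      · rw [if_pos ha, hs]
        exact hf'mono self_mem_Ici hb hb
      · push_neg at ha
        rw [if_neg (not_lt.2 ha)]
        exact hf'mono ha (le_trans ha hab) hab
  have hconv : ConvexOn ℝ (Ici (0:ℝ)) Γ := by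
    apply MonotoneOn.convexOn_of_deriv (convex_Ici 0)
    · exact hΓdiff.continuous.continuousOn
    · exact hΓdiff.differentiableOn
    · intro x hx y hy hxy
      rw [(hΓd x).deriv, (hΓd y).deriv]
      exact hmono hxy
  -- the chord lies below Γ₁ on [0, Rs]
  have hbelow : ∀ R, 0 ≤ R → R ≤ Rs →
      1 + s * R ≤ 2 * Real.exp (-(c*R)) - Real.exp (-(c*R))^2 := by
    have h1t : 0 < 1 - Real.exp (-(c*Rs)) := by linarith
    have hlogle := Real.log_nonpos (by linarith) (by linarith : 1 - Real.exp (-(c*Rs)) ≤ 1)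
    have hER0 : Real.exp (-(c * (-Real.log (1 - Real.exp (-(c*Rs))) / c)))
        = 1 - Real.exp (-(c*Rs)) := by
      rw [show -(c * (-Real.log (1 - Real.exp (-(c*Rs))) / c))
          = Real.log (1 - Real.exp (-(c*Rs))) by field_simp]
      exact Real.exp_log h1t
    have hR00 : 0 ≤ -Real.log (1 - Real.exp (-(c*Rs))) / c :=
      div_nonneg (by linarith) hc0.le
    have hR0Rs : -Real.log (1 - Real.exp (-(c*Rs))) / c ≤ Rs := by
      have h2 : Real.exp (-(c*Rs))
          ≤ Real.exp (-(c * (-Real.log (1 - Real.exp (-(c*Rs))) / c))) := by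
        rw [hER0]; linarith
      have h3 := Real.exp_le_exp.1 h2
      nlinarith
    have := chord_below c Rs (Real.exp (-(c*Rs)))
      (-Real.log (1 - Real.exp (-(c*Rs))) / c) hc0 hRs rfl hER0 hR00 hR0Rs htpos ht2
      (by rw [← hs]; exact hchord)
    intro R h0 h1
    have h2 := this R h0 h1
    rw [← hs] at h2
    exact h2
  have hΓ₁0 : Γ₁ 0 = 1 := by rw [hΓ₁ 0]; norm_num
  refine ⟨hconv, ?_, ?_⟩
  · -- Γ ≤ Γ₁ on [0, ∞)
    intro R hR0
    by_cases hR : R < Rs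
    · rw [hΓL R hR.le, hfeq R]
      exact hbelow R hR0 hR.le
    · rw [hΓ R, if_neg hR]
  · -- maximality
    intro g hg hgle R hR0
    by_cases hR : R < Rs
    · have hb0 : 0 ≤ R / Rs := by positivity
      have hb1 : R / Rs ≤ 1 := by
        rw [div_le_one hRs]; exact hR.le
      have hcomb := hg.2 (self_mem_Ici) (mem_Ici.2 hRs.le)
        (by linarith : (0:ℝ) ≤ 1 - R/Rs) hb0 (by ring)
      simp only [smul_eq_mul, mul_zero, zero_add] at hcomb
      have hRR : R / Rs * Rs = R := by field_simp
      rw [hRR] at hcomb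
      have h1 : g 0 ≤ 1 := by rw [← hΓ₁0]; exact hgle 0 le_rfl
      have h2 : g Rs ≤ Γ₁ Rs := hgle Rs hRs.le
      have hΓR : Γ R = (1 - R/Rs) * 1 + (R/Rs) * Γ₁ Rs := by
        rw [hΓ R, if_pos hR]
        field_simp
        ring
      rw [hΓR]
      calc g R ≤ (1 - R/Rs) * g 0 + (R/Rs) * g Rs := hcomb
        _ ≤ (1 - R/Rs) * 1 + (R/Rs) * Γ₁ Rs := by
            apply add_le_add
            · exact mul_le_mul_of_nonneg_left h1 (by linarith)
            · exact mul_le_mul_of_nonneg_left h2 hb0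
    · rw [hΓ R, if_neg hR]
      exact hgle R hR0
end

section
/- Let U, V be independent random vectors in ℝⁿ with E[U U^T] = E[V V^T] = I_n and zero mean. Let Û = E[U|W_U], V̂ = E[V|W_V] for functions W_U of U and W_V of V, and set e_U = U − Û, e_V = V − V̂ with covariance matrices Σ_{e_U} = E[e_U e_Uᵀ], Σ_{e_V} = E[e_V e_Vᵀ]. Then E[(UᵀV − ÛᵀV̂)²] = tr(Σ_{e_V}) + tr(Σ_{e_U}) − tr(Σ_{e_U} Σ_{e_V}). -/
open MeasureTheory ProbabilityTheory Matrix

section Aux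

variable {Ω : Type*} {m m0 : MeasurableSpace Ω} {μ : Measure Ω}

lemma aux_integrable_mul {f g : Ω → ℝ} (hf : MemLp f 2 μ) (hg : MemLp g 2 μ) :
    Integrable (fun ω => f ω * g ω) μ := by
  have h1 : Integrable (fun ω => (f ω + g ω) ^ 2) μ := by
    have := (hf.add hg).integrable_sq
    simpa using this
  have h : Integrable (fun ω => ((f ω + g ω) ^ 2 - f ω ^ 2 - g ω ^ 2) / 2) μ :=
    ((h1.sub hf.integrable_sq).sub hg.integrable_sq).div_const 2
  exact h.congr (Filter.Eventually.of_forall fun ω => by ring)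

lemma aux_memℒp_two_condexp (hm : m ≤ m0) {μ : Measure Ω} [IsFiniteMeasure μ] {f : Ω → ℝ}
    (hf : MemLp f 2 μ) : MemLp (μ[f|m]) 2 μ := by
  haveI : IsFiniteMeasure (μ.trim hm) := isFiniteMeasure_trim hm
  set g : Lp ℝ 2 μ := (condExpL2 ℝ ℝ hm (hf.toLp f) : Lp ℝ 2 μ) with hgdef
  have hgm : AEStronglyMeasurable[m] (g : Ω → ℝ) μ := lpMeas.aestronglyMeasurable _
  have heq : (g : Ω → ℝ) =ᵐ[μ] μ[f|m] := by
    refine ae_eq_condExp_of_forall_setIntegral_eq hm (hf.integrable one_le_two)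
      (fun s _ _ => ((Lp.memLp g).integrable one_le_two).integrableOn)
      (fun s hs _ => ?_) hgm
    rw [hgdef]
    rw [integral_condExpL2_eq hm (hf.toLp f) hs (measure_ne_top μ s)]
    exact setIntegral_congr_ae (hm s hs) ((hf.coeFn_toLp).mono fun ω h _ => h)
  exact (Lp.memLp g).ae_eq heq

lemma aux_condexp_apply (hm : m ≤ m0) {μ : Measure Ω} [IsFiniteMeasure μ] {n : ℕ}
    {f : Ω → Fin n → ℝ} (hf : Integrable f μ) (i : Fin n) :
    (fun ω => (μ[f|m]) ω i) =ᵐ[μ] μ[fun ω => f ω i|m] := by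
  haveI : IsFiniteMeasure (μ.trim hm) := isFiniteMeasure_trim hm
  have hproj : ∀ {h : Ω → Fin n → ℝ}, Integrable h μ → Integrable (fun ω => h ω i) μ :=
    fun {h} hh =>
      (ContinuousLinearMap.proj (R := ℝ) (φ := fun _ : Fin n => ℝ) i).integrable_comp hh
  refine ae_eq_condExp_of_forall_setIntegral_eq hm (hproj hf)
    (fun s _ _ => (hproj (integrable_condExp (μ := μ) (m := m) (f := f))).integrableOn)
    (fun s hs hμs => ?_)
    (((continuous_apply i).comp_stronglyMeasurable stronglyMeasurable_condExp).aestronglyMeasurable)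
  have h2 := (ContinuousLinearMap.proj (R := ℝ) (φ := fun _ : Fin n => ℝ) i).integral_comp_comm
    ((integrable_condExp (μ := μ) (f := f) (m := m)).integrableOn (s := s))
  have h3 := (ContinuousLinearMap.proj (R := ℝ) (φ := fun _ : Fin n => ℝ) i).integral_comp_comm
    (hf.integrableOn (s := s))
  simp only [ContinuousLinearMap.proj_apply] at h2 h3
  rw [h2, h3, setIntegral_condExp hm hf hs]

lemma aux_integral_add4 {μ : Measure Ω} {A B C D : Ω → ℝ}
    (hA : Integrable A μ) (hB : Integrable B μ) (hC : Integrable C μ) (hD : Integrable D μ) :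
    ∫ ω, (A ω + B ω + C ω + D ω) ∂μ
      = ∫ ω, A ω ∂μ + ∫ ω, B ω ∂μ + ∫ ω, C ω ∂μ + ∫ ω, D ω ∂μ := by
  have key := integral_finset_sum (μ := μ) (Finset.univ : Finset (Fin 4))
    (f := fun k => ![A, B, C, D] k) (fun k _ => by
      fin_cases k <;> simp [hA, hB, hC, hD])
  simpa [Fin.sum_univ_four] using key

end Aux

set_option maxHeartbeats 2000000 in
/-- Error expression for quantized inner products: for independent zero-mean,
identity-covariance random vectors `U, V` in `ℝⁿ`, with `Û = E[U|W_U]`, `V̂ = E[V|W_V]`,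
error covariances `Σ_{e_U}, Σ_{e_V}`, one has
`E[(UᵀV − ÛᵀV̂)²] = tr Σ_{e_V} + tr Σ_{e_U} − tr(Σ_{e_U} Σ_{e_V})`. -/
theorem mse_inner_product_error_expression
    {Ω : Type*} [MeasurableSpace Ω] (μ : Measure Ω) [IsProbabilityMeasure μ]
    {n : ℕ} {α β : Type*} [MeasurableSpace α] [MeasurableSpace β]
    (U V : Ω → (Fin n → ℝ)) (hU : Measurable U) (hV : Measurable V)
    (hUL2 : MemLp U 2 μ) (hVL2 : MemLp V 2 μ)
    (hU0 : ∫ ω, U ω ∂μ = 0) (hV0 : ∫ ω, V ω ∂μ = 0)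
    (hUcov : ∀ i j, ∫ ω, U ω i * U ω j ∂μ = if i = j then 1 else 0)
    (hVcov : ∀ i j, ∫ ω, V ω i * V ω j ∂μ = if i = j then 1 else 0)
    (hindep : IndepFun U V μ)
    (f₁ : (Fin n → ℝ) → α) (f₂ : (Fin n → ℝ) → β)
    (hf₁ : Measurable f₁) (hf₂ : Measurable f₂)
    (Uhat Vhat : Ω → (Fin n → ℝ))
    (hUhat : Uhat = μ[U | MeasurableSpace.comap (fun ω => f₁ (U ω)) inferInstance])
    (hVhat : Vhat = μ[V | MeasurableSpace.comap (fun ω => f₂ (V ω)) inferInstance])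
    (SigU SigV : Matrix (Fin n) (Fin n) ℝ)
    (hSigU : ∀ i j, SigU i j = ∫ ω, (U ω i - Uhat ω i) * (U ω j - Uhat ω j) ∂μ)
    (hSigV : ∀ i j, SigV i j = ∫ ω, (V ω i - Vhat ω i) * (V ω j - Vhat ω j) ∂μ) :
    ∫ ω, (U ω ⬝ᵥ V ω - Uhat ω ⬝ᵥ Vhat ω) ^ 2 ∂μ
      = Matrix.trace SigV + Matrix.trace SigU - Matrix.trace (SigU * SigV) := by
  classical
  have hmU : MeasurableSpace.comap (fun ω => f₁ (U ω)) inferInstance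
      ≤ ‹MeasurableSpace Ω› :=
    (show Measurable fun ω => f₁ (U ω) from hf₁.comp hU).comap_le
  have hmV : MeasurableSpace.comap (fun ω => f₂ (V ω)) inferInstance
      ≤ ‹MeasurableSpace Ω› :=
    (show Measurable fun ω => f₂ (V ω) from hf₂.comp hV).comap_le
  obtain ⟨mU, hmUdef⟩ : ∃ m : MeasurableSpace Ω,
      m = MeasurableSpace.comap (fun ω => f₁ (U ω)) inferInstance := ⟨_, rfl⟩
  obtain ⟨mV, hmVdef⟩ : ∃ m : MeasurableSpace Ω,
      m = MeasurableSpace.comap (fun ω => f₂ (V ω)) inferInstance := ⟨_, rfl⟩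
  rw [← hmUdef] at hUhat hmU
  rw [← hmVdef] at hVhat hmV
  haveI : IsFiniteMeasure (μ.trim hmU) := isFiniteMeasure_trim hmU
  haveI : IsFiniteMeasure (μ.trim hmV) := isFiniteMeasure_trim hmV
  -- coordinate MemLp facts
  have hUi : ∀ i, MemLp (fun ω => U ω i) 2 μ := fun i =>
    (ContinuousLinearMap.proj (R := ℝ) (φ := fun _ : Fin n => ℝ) i).comp_memLp' hUL2
  have hVi : ∀ i, MemLp (fun ω => V ω i) 2 μ := fun i =>
    (ContinuousLinearMap.proj (R := ℝ) (φ := fun _ : Fin n => ℝ) i).comp_memLp' hVL2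
  have hUhat_sm : StronglyMeasurable[mU] Uhat := by
    rw [hUhat]; exact stronglyMeasurable_condExp
  have hVhat_sm : StronglyMeasurable[mV] Vhat := by
    rw [hVhat]; exact stronglyMeasurable_condExp
  have hUhati_sm : ∀ i, StronglyMeasurable[mU] fun ω => Uhat ω i := fun i =>
    (continuous_apply i).comp_stronglyMeasurable hUhat_sm
  have hVhati_sm : ∀ i, StronglyMeasurable[mV] fun ω => Vhat ω i := fun i =>
    (continuous_apply i).comp_stronglyMeasurable hVhat_sm
  have hUhati_ae : ∀ i, (fun ω => Uhat ω i) =ᵐ[μ] μ[fun ω => U ω i|mU] := fun i => by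
    rw [hUhat]; exact aux_condexp_apply hmU (hUL2.integrable one_le_two) i
  have hVhati_ae : ∀ i, (fun ω => Vhat ω i) =ᵐ[μ] μ[fun ω => V ω i|mV] := fun i => by
    rw [hVhat]; exact aux_condexp_apply hmV (hVL2.integrable one_le_two) i
  have hUhati : ∀ i, MemLp (fun ω => Uhat ω i) 2 μ := fun i =>
    (aux_memℒp_two_condexp hmU (hUi i)).ae_eq (hUhati_ae i).symm
  have hVhati : ∀ i, MemLp (fun ω => Vhat ω i) 2 μ := fun i =>
    (aux_memℒp_two_condexp hmV (hVi i)).ae_eq (hVhati_ae i).symm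
  have heUi : ∀ i, MemLp (fun ω => U ω i - Uhat ω i) 2 μ := fun i => (hUi i).sub (hUhati i)
  have heVi : ∀ i, MemLp (fun ω => V ω i - Vhat ω i) 2 μ := fun i => (hVi i).sub (hVhati i)
  -- conditional expectation of the error is zero
  have hcondU0 : ∀ i, μ[fun ω => U ω i - Uhat ω i|mU] =ᵐ[μ] 0 := fun i => by
    have h1 : μ[fun ω => U ω i - Uhat ω i|mU]
        =ᵐ[μ] μ[fun ω => U ω i|mU] - μ[fun ω => Uhat ω i|mU] :=
      condExp_sub ((hUi i).integrable one_le_two) ((hUhati i).integrable one_le_two) mU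
    have h2 : μ[fun ω => Uhat ω i|mU] = fun ω => Uhat ω i :=
      condExp_of_stronglyMeasurable hmU (hUhati_sm i) ((hUhati i).integrable one_le_two)
    refine h1.trans ?_
    rw [h2]
    filter_upwards [hUhati_ae i] with ω hω
    simp [Pi.sub_apply, ← hω]
  -- orthogonality: E[Uhat_j * eU_i] = 0
  have orthU : ∀ i j, ∫ ω, Uhat ω j * (U ω i - Uhat ω i) ∂μ = 0 := fun i j => by
    have hint : Integrable (fun ω => Uhat ω j * (U ω i - Uhat ω i)) μ :=
      aux_integrable_mul (hUhati j) (heUi i)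
    have h2 : μ[fun ω => Uhat ω j * (U ω i - Uhat ω i)|mU]
        =ᵐ[μ] (fun ω => Uhat ω j) * μ[fun ω => U ω i - Uhat ω i|mU] :=
      condExp_mul_of_stronglyMeasurable_left (hUhati_sm j) hint ((heUi i).integrable one_le_two)
    have h3 : μ[fun ω => Uhat ω j * (U ω i - Uhat ω i)|mU] =ᵐ[μ] 0 := by
      refine h2.trans ?_
      filter_upwards [hcondU0 i] with ω hω
      simp [hω]
    rw [← integral_condExp hmU (f := fun ω => Uhat ω j * (U ω i - Uhat ω i)),
      integral_congr_ae h3]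
    simp
  -- independence machinery
  have hindepσ : Indep (MeasurableSpace.comap U inferInstance)
      (MeasurableSpace.comap V inferInstance) μ := (IndepFun_iff_Indep U V μ).mp hindep
  have hmUU : mU ≤ MeasurableSpace.comap U inferInstance := by
    have hcc : mU = MeasurableSpace.comap U (MeasurableSpace.comap f₁ inferInstance) := by
      rw [hmUdef]; exact (MeasurableSpace.comap_comp (f := f₁) (g := U)).symm
    rw [hcc]; exact MeasurableSpace.comap_mono hf₁.comap_le
  have hmVV : mV ≤ MeasurableSpace.comap V inferInstance := by
    have hcc : mV = MeasurableSpace.comap V (MeasurableSpace.comap f₂ inferInstance) := by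
      rw [hmVdef]; exact (MeasurableSpace.comap_comp (f := f₂) (g := V)).symm
    rw [hcc]; exact MeasurableSpace.comap_mono hf₂.comap_le
  have hUm : Measurable[MeasurableSpace.comap U inferInstance] U :=
    measurable_iff_comap_le.mpr le_rfl
  have hVm : Measurable[MeasurableSpace.comap V inferInstance] V :=
    measurable_iff_comap_le.mpr le_rfl
  have mu : ∀ i, Measurable[MeasurableSpace.comap U inferInstance] fun ω => U ω i := fun i =>
    (measurable_pi_apply i).comp hUm
  have mv : ∀ i, Measurable[MeasurableSpace.comap V inferInstance] fun ω => V ω i := fun i =>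
    (measurable_pi_apply i).comp hVm
  have mhu : ∀ i, Measurable[MeasurableSpace.comap U inferInstance] fun ω => Uhat ω i :=
    fun i => ((hUhati_sm i).measurable).mono hmUU le_rfl
  have mhv : ∀ i, Measurable[MeasurableSpace.comap V inferInstance] fun ω => Vhat ω i :=
    fun i => ((hVhati_sm i).measurable).mono hmVV le_rfl
  have meu : ∀ i, Measurable[MeasurableSpace.comap U inferInstance]
      fun ω => U ω i - Uhat ω i := fun i => (mu i).sub (mhu i)
  have mev : ∀ i, Measurable[MeasurableSpace.comap V inferInstance]
      fun ω => V ω i - Vhat ω i := fun i => (mv i).sub (mhv i)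
  -- generic product formula for independent factors
  have hprod : ∀ {X Y : Ω → ℝ}, Measurable[MeasurableSpace.comap U inferInstance] X →
      Measurable[MeasurableSpace.comap V inferInstance] Y →
      Integrable X μ → Integrable Y μ →
      (∫ ω, X ω * Y ω ∂μ = (∫ ω, X ω ∂μ) * ∫ ω, Y ω ∂μ) ∧
        Integrable (fun ω => X ω * Y ω) μ := by
    intro X Y hX hY hXi hYi
    have hi : IndepFun X Y μ := by
      rw [IndepFun_iff_Indep]
      exact Kernel.indep_of_indep_of_le_left
        (Kernel.indep_of_indep_of_le_right hindepσ (measurable_iff_comap_le.mp hY))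
        (measurable_iff_comap_le.mp hX)
    refine ⟨?_, hi.integrable_mul hXi hYi⟩
    exact hi.integral_mul_eq_mul_integral hXi.aestronglyMeasurable hYi.aestronglyMeasurable
  -- the four building blocks for each pair (i, j)
  have hIaa : ∀ i j,
      (∫ ω, ((U ω i - Uhat ω i) * (U ω j - Uhat ω j)) * (V ω i * V ω j) ∂μ
          = SigU i j * (if i = j then 1 else 0)) ∧
        Integrable (fun ω => ((U ω i - Uhat ω i) * (U ω j - Uhat ω j)) * (V ω i * V ω j)) μ :=
    fun i j => by
      have h := hprod ((meu i).mul (meu j)) ((mv i).mul (mv j))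
        (aux_integrable_mul (heUi i) (heUi j)) (aux_integrable_mul (hVi i) (hVi j))
      simp only [Pi.mul_apply] at h
      refine ⟨?_, h.2⟩
      rw [h.1, ← hSigU i j, hVcov i j]
  have hIab : ∀ i j,
      (∫ ω, ((U ω i - Uhat ω i) * Uhat ω j) * (V ω i * (V ω j - Vhat ω j)) ∂μ = 0) ∧
        Integrable (fun ω => ((U ω i - Uhat ω i) * Uhat ω j)
          * (V ω i * (V ω j - Vhat ω j))) μ :=
    fun i j => by
      have h := hprod ((meu i).mul (mhu j)) ((mv i).mul (mev j))
        (aux_integrable_mul (heUi i) (hUhati j)) (aux_integrable_mul (hVi i) (heVi j))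
      simp only [Pi.mul_apply] at h
      refine ⟨?_, h.2⟩
      rw [h.1]
      have : ∫ ω, (U ω i - Uhat ω i) * Uhat ω j ∂μ
          = ∫ ω, Uhat ω j * (U ω i - Uhat ω i) ∂μ :=
        integral_congr_ae (Filter.Eventually.of_forall fun ω => by ring)
      rw [this, orthU i j, zero_mul]
  have hIba : ∀ i j,
      (∫ ω, (Uhat ω i * (U ω j - Uhat ω j)) * ((V ω i - Vhat ω i) * V ω j) ∂μ = 0) ∧
        Integrable (fun ω => (Uhat ω i * (U ω j - Uhat ω j))
          * ((V ω i - Vhat ω i) * V ω j)) μ :=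
    fun i j => by
      have h := hprod ((mhu i).mul (meu j)) ((mev i).mul (mv j))
        (aux_integrable_mul (hUhati i) (heUi j)) (aux_integrable_mul (heVi i) (hVi j))
      simp only [Pi.mul_apply] at h
      refine ⟨?_, h.2⟩
      rw [h.1, orthU j i, zero_mul]
  -- E[Uhat_i Uhat_j] = δ_ij − SigU i j
  have hUhatcov : ∀ i j, ∫ ω, Uhat ω i * Uhat ω j ∂μ
      = (if i = j then 1 else 0) - SigU i j := fun i j => by
    have i1 : Integrable (fun ω => Uhat ω i * Uhat ω j) μ :=
      aux_integrable_mul (hUhati i) (hUhati j)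
    have i2 : Integrable (fun ω => Uhat ω i * (U ω j - Uhat ω j)) μ :=
      aux_integrable_mul (hUhati i) (heUi j)
    have i3 : Integrable (fun ω => (U ω i - Uhat ω i) * Uhat ω j) μ :=
      aux_integrable_mul (heUi i) (hUhati j)
    have i4 : Integrable (fun ω => (U ω i - Uhat ω i) * (U ω j - Uhat ω j)) μ :=
      aux_integrable_mul (heUi i) (heUi j)
    have hexp : (if i = j then (1 : ℝ) else 0)
        = ∫ ω, Uhat ω i * Uhat ω j ∂μ + ∫ ω, Uhat ω i * (U ω j - Uhat ω j) ∂μ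
          + ∫ ω, (U ω i - Uhat ω i) * Uhat ω j ∂μ
          + ∫ ω, (U ω i - Uhat ω i) * (U ω j - Uhat ω j) ∂μ := by
      calc (if i = j then (1 : ℝ) else 0) = ∫ ω, U ω i * U ω j ∂μ := (hUcov i j).symm
        _ = ∫ ω, (Uhat ω i * Uhat ω j + Uhat ω i * (U ω j - Uhat ω j)
            + (U ω i - Uhat ω i) * Uhat ω j
            + (U ω i - Uhat ω i) * (U ω j - Uhat ω j)) ∂μ :=
          integral_congr_ae (Filter.Eventually.of_forall fun ω => by ring)
        _ = _ := aux_integral_add4 i1 i2 i3 i4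
    have e2 : ∫ ω, Uhat ω i * (U ω j - Uhat ω j) ∂μ = 0 := orthU j i
    have e3 : ∫ ω, (U ω i - Uhat ω i) * Uhat ω j ∂μ = 0 := by
      rw [show (fun ω => (U ω i - Uhat ω i) * Uhat ω j)
          = fun ω => Uhat ω j * (U ω i - Uhat ω i) from funext fun ω => by ring]
      exact orthU i j
    rw [e2, e3, ← hSigU i j] at hexp
    linarith
  have hIbb : ∀ i j,
      (∫ ω, (Uhat ω i * Uhat ω j) * ((V ω i - Vhat ω i) * (V ω j - Vhat ω j)) ∂μ
          = ((if i = j then 1 else 0) - SigU i j) * SigV i j) ∧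
        Integrable (fun ω => (Uhat ω i * Uhat ω j)
          * ((V ω i - Vhat ω i) * (V ω j - Vhat ω j))) μ :=
    fun i j => by
      have h := hprod ((mhu i).mul (mhu j)) ((mev i).mul (mev j))
        (aux_integrable_mul (hUhati i) (hUhati j)) (aux_integrable_mul (heVi i) (heVi j))
      simp only [Pi.mul_apply] at h
      refine ⟨?_, h.2⟩
      rw [h.1, hUhatcov i j, ← hSigV i j]
  -- pointwise expansion of the integrand
  have hpt : ∀ ω, (U ω ⬝ᵥ V ω - Uhat ω ⬝ᵥ Vhat ω) ^ 2
      = ∑ i, ∑ j, ((U ω i - Uhat ω i) * V ω i + Uhat ω i * (V ω i - Vhat ω i))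
        * ((U ω j - Uhat ω j) * V ω j + Uhat ω j * (V ω j - Vhat ω j)) := by
    intro ω
    have h1 : U ω ⬝ᵥ V ω - Uhat ω ⬝ᵥ Vhat ω
        = ∑ i, ((U ω i - Uhat ω i) * V ω i + Uhat ω i * (V ω i - Vhat ω i)) := by
      simp only [dotProduct]
      rw [← Finset.sum_sub_distrib]
      exact Finset.sum_congr rfl fun i _ => by ring
    rw [h1, sq, Finset.sum_mul_sum]
  -- per-pair integral value
  have hterm : ∀ i j,
      (∫ ω, ((U ω i - Uhat ω i) * V ω i + Uhat ω i * (V ω i - Vhat ω i))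
          * ((U ω j - Uhat ω j) * V ω j + Uhat ω j * (V ω j - Vhat ω j)) ∂μ
        = SigU i j * (if i = j then 1 else 0)
          + ((if i = j then 1 else 0) - SigU i j) * SigV i j) ∧
      Integrable (fun ω => ((U ω i - Uhat ω i) * V ω i + Uhat ω i * (V ω i - Vhat ω i))
          * ((U ω j - Uhat ω j) * V ω j + Uhat ω j * (V ω j - Vhat ω j))) μ := fun i j => by
    obtain ⟨haa, iaa⟩ := hIaa i j
    obtain ⟨hab, iab⟩ := hIab i j
    obtain ⟨hba, iba⟩ := hIba i j
    obtain ⟨hbb, ibb⟩ := hIbb i j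
    have hint : Integrable (fun ω =>
        ((U ω i - Uhat ω i) * V ω i + Uhat ω i * (V ω i - Vhat ω i))
          * ((U ω j - Uhat ω j) * V ω j + Uhat ω j * (V ω j - Vhat ω j))) μ := by
      have := ((iaa.add iab).add iba).add ibb
      exact this.congr (Filter.Eventually.of_forall fun ω => by
        simp only [Pi.add_apply]; ring)
    refine ⟨?_, hint⟩
    have hsplit : ∫ ω, ((U ω i - Uhat ω i) * V ω i + Uhat ω i * (V ω i - Vhat ω i))
          * ((U ω j - Uhat ω j) * V ω j + Uhat ω j * (V ω j - Vhat ω j)) ∂μ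
        = ∫ ω, (((U ω i - Uhat ω i) * (U ω j - Uhat ω j)) * (V ω i * V ω j)
            + ((U ω i - Uhat ω i) * Uhat ω j) * (V ω i * (V ω j - Vhat ω j))
            + (Uhat ω i * (U ω j - Uhat ω j)) * ((V ω i - Vhat ω i) * V ω j)
            + (Uhat ω i * Uhat ω j) * ((V ω i - Vhat ω i) * (V ω j - Vhat ω j))) ∂μ :=
      integral_congr_ae (Filter.Eventually.of_forall fun ω => by ring)
    rw [hsplit, aux_integral_add4 iaa iab iba ibb, haa, hab, hba, hbb]
    ring
  -- symmetry of SigV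
  have hSigVsymm : ∀ i j, SigV j i = SigV i j := fun i j => by
    rw [hSigV j i, hSigV i j]
    exact integral_congr_ae (Filter.Eventually.of_forall fun ω => by ring)
  -- main computation
  calc ∫ ω, (U ω ⬝ᵥ V ω - Uhat ω ⬝ᵥ Vhat ω) ^ 2 ∂μ
      = ∫ ω, ∑ i, ∑ j, ((U ω i - Uhat ω i) * V ω i + Uhat ω i * (V ω i - Vhat ω i))
          * ((U ω j - Uhat ω j) * V ω j + Uhat ω j * (V ω j - Vhat ω j)) ∂μ :=
        integral_congr_ae (Filter.Eventually.of_forall hpt)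
    _ = ∑ i, ∑ j, ∫ ω, ((U ω i - Uhat ω i) * V ω i + Uhat ω i * (V ω i - Vhat ω i))
          * ((U ω j - Uhat ω j) * V ω j + Uhat ω j * (V ω j - Vhat ω j)) ∂μ := by
        rw [integral_finset_sum _ (fun i _ => integrable_finset_sum _ fun j _ => (hterm i j).2)]
        exact Finset.sum_congr rfl fun i _ => integral_finset_sum _ fun j _ => (hterm i j).2
    _ = ∑ i, ∑ j, (SigU i j * (if i = j then 1 else 0)
          + ((if i = j then 1 else 0) - SigU i j) * SigV i j) :=
        Finset.sum_congr rfl fun i _ => Finset.sum_congr rfl fun j _ => (hterm i j).1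
    _ = ∑ i, (SigU i i + SigV i i - ∑ j, SigU i j * SigV i j) := by
        refine Finset.sum_congr rfl fun i _ => ?_
        have h1 : ∀ j, SigU i j * (if i = j then 1 else 0)
            + ((if i = j then 1 else 0) - SigU i j) * SigV i j
            = (if i = j then SigU i j + SigV i j else 0) - SigU i j * SigV i j := fun j => by
          split_ifs <;> ring
        rw [Finset.sum_congr rfl fun j _ => h1 j, Finset.sum_sub_distrib, Finset.sum_ite_eq]
        simp
    _ = Matrix.trace SigV + Matrix.trace SigU - Matrix.trace (SigU * SigV) := by
        simp only [Matrix.trace, Matrix.diag, Matrix.mul_apply]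
        rw [Finset.sum_sub_distrib, Finset.sum_add_distrib]
        have hC : ∑ i, ∑ j, SigU i j * SigV j i = ∑ i, ∑ j, SigU i j * SigV i j :=
          Finset.sum_congr rfl fun i _ => Finset.sum_congr rfl fun j _ => by
            rw [hSigVsymm i j]
        rw [hC]
        ring
end

section
/- Let λ₁,…,λ_d > 0 with (1/d)·Σᵢ λᵢ = σ², let L = maxᵢ λᵢ, and suppose (1/d)·Σᵢ ln λᵢ ≥ ln σ² − ln(1+δ) for some δ ≥ 0. Then (1/d)·Σᵢ λᵢ² ≤ σ⁴ + 2·L²·ln(1+δ). -/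
lemma log_taylor_bound (L s x : ℝ) (hs : 0 < s) (hsL : s ≤ L) (hx : 0 < x) (hxL : x ≤ L) :
    Real.log x ≤ Real.log s + (x - s)/s - (x - s)^2/(2*L^2) := by
  have hLpos : 0 < L := lt_of_lt_of_le hs hsL
  set g : ℝ → ℝ := fun t => (t - s)/s - (t - s)^2/(2*L^2) - Real.log t with hg
  have hderiv : ∀ t : ℝ, 0 < t → HasDerivAt g (1/s - (t-s)/L^2 - 1/t) t := by
    intro t ht
    have h1 : HasDerivAt (fun t : ℝ => (t - s)/s) (1/s) t := by
      simpa using ((hasDerivAt_id t).sub_const s).div_const s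
    have h2 : HasDerivAt (fun t : ℝ => (t - s)^2/(2*L^2)) ((t-s)/L^2) t := by
      have := (((hasDerivAt_id t).sub_const s).pow 2).div_const (2*L^2)
      refine this.congr_deriv ?_
      simp only [id]
      field_simp
      ring
    have h3 : HasDerivAt Real.log (1/t) t := by
      simpa [one_div] using Real.hasDerivAt_log (ne_of_gt ht)
    exact (h1.sub h2).sub h3
  have hcont : ∀ a b : ℝ, 0 < a → ContinuousOn g (Set.Icc a b) := by
    intro a b ha
    have hsub : Set.Icc a b ⊆ {t : ℝ | 0 < t} := fun t htt => lt_of_lt_of_le ha htt.1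
    intro t htt
    exact ((hderiv t (hsub htt)).continuousAt).continuousWithinAt
  have key : g s ≤ g x := by
    rcases le_total s x with hsx | hxs
    · have mono : MonotoneOn g (Set.Icc s x) := by
        apply monotoneOn_of_deriv_nonneg (convex_Icc s x) (hcont s x hs)
        · intro t htt
          rw [interior_Icc] at htt
          exact ((hderiv t (lt_trans hs htt.1)).differentiableAt).differentiableWithinAt
        · intro t htt
          rw [interior_Icc] at htt
          have ht : 0 < t := lt_trans hs htt.1
          rw [(hderiv t ht).deriv]
          have h1 : 1/s - 1/t = (t - s)/(s*t) := by field_simp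
          rw [show 1/s - (t-s)/L^2 - 1/t = (1/s - 1/t) - (t-s)/L^2 by ring, h1]
          have hts : 0 ≤ t - s := by linarith [htt.1]
          have hst : s * t ≤ L^2 := by nlinarith [htt.2.le, hxL]
          have hstpos : 0 < s * t := mul_pos hs ht
          have : (t-s)/L^2 ≤ (t-s)/(s*t) :=
            div_le_div_of_nonneg_left hts hstpos hst
          linarith
      exact mono (Set.left_mem_Icc.2 hsx) (Set.right_mem_Icc.2 hsx) hsx
    · have anti : AntitoneOn g (Set.Icc x s) := by
        apply antitoneOn_of_deriv_nonpos (convex_Icc x s) (hcont x s hx)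
        · intro t htt
          rw [interior_Icc] at htt
          exact ((hderiv t (lt_trans hx htt.1)).differentiableAt).differentiableWithinAt
        · intro t htt
          rw [interior_Icc] at htt
          have ht : 0 < t := lt_trans hx htt.1
          rw [(hderiv t ht).deriv]
          have h1 : 1/s - 1/t = (t - s)/(s*t) := by field_simp
          rw [show 1/s - (t-s)/L^2 - 1/t = (1/s - 1/t) - (t-s)/L^2 by ring, h1]
          have hts : t - s ≤ 0 := by linarith [htt.2]
          have hst : s * t ≤ L^2 := by nlinarith [htt.2, hsL, ht.le]
          have hstpos : 0 < s * t := mul_pos hs ht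
          have hL2 : 0 < L^2 := by positivity
          have : (t-s)/(s*t) ≤ (t-s)/L^2 := by
            rw [div_le_div_iff₀ hstpos hL2]
            nlinarith
          linarith
      exact anti (Set.left_mem_Icc.2 hxs) (Set.right_mem_Icc.2 hxs) hxs
  have : (s - s)/s - (s-s)^2/(2*L^2) - Real.log s ≤ (x - s)/s - (x-s)^2/(2*L^2) - Real.log x := key
  simp at this
  linarith

/-- Spectral-flatness inequality: if `λ₁,…,λ_d > 0` with average `σ²`, `L = maxᵢ λᵢ`, and
`(1/d)·Σᵢ ln λᵢ ≥ ln σ² − ln(1+δ)` for some `δ ≥ 0`, then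
`(1/d)·Σᵢ λᵢ² ≤ σ⁴ + 2·L²·ln(1+δ)`. -/
theorem spectral_flatness (d : ℕ) (hd : 0 < d)
    (lam : Fin d → ℝ) (hpos : ∀ i, 0 < lam i)
    (sigma2 L delta : ℝ) (hdelta : 0 ≤ delta)
    (havg : (1 / (d : ℝ)) * ∑ i, lam i = sigma2)
    (hL : IsGreatest (Set.range lam) L)
    (hln : Real.log sigma2 - Real.log (1 + delta) ≤ (1 / (d : ℝ)) * ∑ i, Real.log (lam i)) :
    (1 / (d : ℝ)) * ∑ i, (lam i) ^ 2 ≤ sigma2 ^ 2 + 2 * L ^ 2 * Real.log (1 + delta) := by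
  have hdR : (0:ℝ) < (d:ℝ) := by exact_mod_cast hd
  have hle : ∀ i, lam i ≤ L := fun i => hL.2 ⟨i, rfl⟩
  have hsum_pos : 0 < ∑ i, lam i :=
    Finset.sum_pos (fun i _ => hpos i) (Finset.univ_nonempty_iff.mpr ⟨⟨0, hd⟩⟩)
  have hs : 0 < sigma2 := by rw [← havg]; positivity
  have hsumL : ∑ i, lam i ≤ (d:ℝ) * L := by
    calc ∑ i, lam i ≤ ∑ _i : Fin d, L := Finset.sum_le_sum (fun i _ => hle i)
    _ = (d:ℝ) * L := by simp [mul_comm]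
  have hsL : sigma2 ≤ L := by
    rw [← havg]
    rw [div_mul_eq_mul_div, one_mul, div_le_iff₀ hdR]
    linarith [hsumL]
  have hL2 : 0 < L^2 := by
    have : 0 < L := lt_of_lt_of_le hs hsL
    positivity
  -- sum the pointwise bound
  have hbound : ∑ i, Real.log (lam i)
      ≤ ∑ i, (Real.log sigma2 + (lam i - sigma2)/sigma2 - (lam i - sigma2)^2/(2*L^2)) :=
    Finset.sum_le_sum (fun i _ => log_taylor_bound L sigma2 (lam i) hs hsL (hpos i) (hle i))
  have hsum_eq : ∑ i, lam i = (d:ℝ) * sigma2 := by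
    field_simp at havg
    linarith [havg]
  have hcenter : ∑ i, (lam i - sigma2)/sigma2 = 0 := by
    rw [← Finset.sum_div, Finset.sum_sub_distrib, hsum_eq]
    simp
  have hsq : ∑ i, (lam i - sigma2)^2 = (∑ i, (lam i)^2) - (d:ℝ) * sigma2^2 := by
    have : ∀ i, (lam i - sigma2)^2 = (lam i)^2 - 2*sigma2*(lam i) + sigma2^2 := by
      intro i; ring
    simp_rw [this]
    rw [Finset.sum_add_distrib, Finset.sum_sub_distrib, ← Finset.mul_sum, hsum_eq]
    simp
    ring
  have hsum2 : ∑ i, (Real.log sigma2 + (lam i - sigma2)/sigma2 - (lam i - sigma2)^2/(2*L^2))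
      = (d:ℝ) * Real.log sigma2 - ((∑ i, (lam i)^2) - (d:ℝ) * sigma2^2)/(2*L^2) := by
    rw [Finset.sum_sub_distrib, Finset.sum_add_distrib, hcenter, ← Finset.sum_div, hsq]
    simp [mul_comm]
  rw [hsum2] at hbound
  -- from hln
  have hln' : (d:ℝ) * (Real.log sigma2 - Real.log (1 + delta)) ≤ ∑ i, Real.log (lam i) := by
    rw [div_mul_eq_mul_div, one_mul, le_div_iff₀ hdR, mul_comm] at hln
    linarith [hln]
  have hmain : ((∑ i, (lam i)^2) - (d:ℝ) * sigma2^2)/(2*L^2) ≤ (d:ℝ) * Real.log (1 + delta) := by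
    nlinarith [hbound, hln']
  rw [div_le_iff₀ (by positivity : (0:ℝ) < 2*L^2)] at hmain
  rw [div_mul_eq_mul_div, one_mul, div_le_iff₀ hdR]
  nlinarith [hmain]
end

section
/- Let (U, Z) be the first two columns (scaled by √n) of a Haar-uniform orthogonal matrix in ℝ^{n×n}, so U, Z are each uniform on √n·S^{n−1} and UᵀZ = 0 almost surely. Then E[U₁² Z₁²] = n/(n+2) and for 1 ≤ d ≤ n, E[(U_{[d]}ᵀ Z_{[d]})²] = d·n·(n−d)/((n+2)(n−1)). -/
open MeasureTheory ProbabilityTheory Matrix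

set_option linter.unusedSectionVars false
set_option linter.unusedTactic false

namespace OrthoAux

variable {Ω : Type*} [MeasurableSpace Ω] {μ : Measure Ω} [IsProbabilityMeasure μ]
variable {n : ℕ} {S : Ω → (Fin n → Fin n → ℝ)}

noncomputable def rc : ℝ := Real.sqrt 2 / 2

lemma rc_sq : rc * rc = 1 / 2 := by
  rw [rc, div_mul_div_comm, Real.mul_self_sqrt (by norm_num)]
  norm_num

lemma meas_entry (hS : Measurable S) (i j : Fin n) : Measurable (fun ω => S ω i j) :=
  (measurable_pi_apply j).comp ((measurable_pi_apply i).comp hS)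

lemma meas_ent (i j : Fin n) : Measurable (fun M : Fin n → Fin n → ℝ => M i j) :=
  (measurable_pi_apply j).comp (measurable_pi_apply i)

lemma meas4 (a b c d e f p q : Fin n) :
    Measurable (fun M : Fin n → Fin n → ℝ => M a b * M c d * M e f * M p q) :=
  (((meas_ent a b).mul (meas_ent c d)).mul (meas_ent e f)).mul (meas_ent p q)

lemma meas2 (a b c d : Fin n) :
    Measurable (fun M : Fin n → Fin n → ℝ => M a b * M c d) :=
  (meas_ent a b).mul (meas_ent c d)

lemma entry_bound (horth : ∀ᵐ ω ∂μ, (Matrix.of (S ω))ᵀ * Matrix.of (S ω) = 1) :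
    ∀ᵐ ω ∂μ, ∀ i j, |S ω i j| ≤ 1 := by
  filter_upwards [horth] with ω h
  intro i j
  have h2 := congrFun (congrFun h j) j
  have h3 : ∑ k, S ω k j * S ω k j = 1 := by
    simpa [Matrix.mul_apply, Matrix.one_apply, Matrix.transpose_apply] using h2
  have h4 : S ω i j * S ω i j ≤ 1 := by
    rw [← h3]
    exact Finset.single_le_sum (f := fun k => S ω k j * S ω k j)
      (fun k _ => mul_self_nonneg _) (Finset.mem_univ i)
  nlinarith [abs_nonneg (S ω i j), sq_abs (S ω i j)]

lemma col_orth (horth : ∀ᵐ ω ∂μ, (Matrix.of (S ω))ᵀ * Matrix.of (S ω) = 1) (j j' : Fin n) :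
    ∀ᵐ ω ∂μ, ∑ i, S ω i j * S ω i j' = if j = j' then 1 else 0 := by
  filter_upwards [horth] with ω h
  have h2 := congrFun (congrFun h j) j'
  simpa [Matrix.mul_apply, Matrix.one_apply, Matrix.transpose_apply] using h2

lemma int_prod (hS : Measurable S)
    (horth : ∀ᵐ ω ∂μ, (Matrix.of (S ω))ᵀ * Matrix.of (S ω) = 1)
    (m : ℕ) (f g : Fin m → Fin n) :
    Integrable (fun ω => ∏ t, S ω (f t) (g t)) μ := by
  have hm : Measurable fun ω => ∏ t, S ω (f t) (g t) :=
    Finset.measurable_prod _ fun t _ => meas_entry hS _ _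
  refine ⟨hm.aestronglyMeasurable, ?_⟩
  apply HasFiniteIntegral.of_bounded (C := (1:ℝ))
  filter_upwards [entry_bound horth] with ω h
  rw [Real.norm_eq_abs, Finset.abs_prod]
  calc ∏ t, |S ω (f t) (g t)| ≤ ∏ t : Fin m, 1 :=
        Finset.prod_le_prod (fun t _ => abs_nonneg _) (fun t _ => h _ _)
    _ = 1 := by simp

lemma int4 (hS : Measurable S)
    (horth : ∀ᵐ ω ∂μ, (Matrix.of (S ω))ᵀ * Matrix.of (S ω) = 1)
    (a b c d e f p q : Fin n) :
    Integrable (fun ω => S ω a b * S ω c d * S ω e f * S ω p q) μ := by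
  have := int_prod hS horth 4 ![a, c, e, p] ![b, d, f, q]
  simpa [Fin.prod_univ_four, mul_assoc] using this

lemma int2 (hS : Measurable S)
    (horth : ∀ᵐ ω ∂μ, (Matrix.of (S ω))ᵀ * Matrix.of (S ω) = 1)
    (a b c d : Fin n) :
    Integrable (fun ω => S ω a b * S ω c d) μ := by
  have := int_prod hS horth 2 ![a, c] ![b, d]
  simpa [Fin.prod_univ_two] using this

lemma inv_int (hS : Measurable S)
    (hinv : ∀ Q : Matrix (Fin n) (Fin n) ℝ, Qᵀ * Q = 1 →
      Measure.map (fun ω => Matrix.of.symm (Q * Matrix.of (S ω))) μ = Measure.map S μ)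
    (Q : Matrix (Fin n) (Fin n) ℝ) (hQ : Qᵀ * Q = 1)
    (g : (Fin n → Fin n → ℝ) → ℝ) (hg : Measurable g) :
    ∫ ω, g (fun i j => ∑ k, Q i k * S ω k j) ∂μ = ∫ ω, g (S ω) ∂μ := by
  have hT : Measurable (fun ω => Matrix.of.symm (Q * Matrix.of (S ω))) := by
    apply measurable_pi_lambda
    intro i
    apply measurable_pi_lambda
    intro j
    have : (fun ω => (Q * Matrix.of (S ω)) i j) = fun ω => ∑ k, Q i k * S ω k j := by
      funext ω; simp [Matrix.mul_apply]
    simp only [Matrix.of_symm_apply]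
    rw [this]
    exact Finset.measurable_sum _ fun k _ => (meas_entry hS k j).const_mul _
  have e1 : ∫ ω, g (fun i j => ∑ k, Q i k * S ω k j) ∂μ
      = ∫ x, g x ∂(Measure.map (fun ω => Matrix.of.symm (Q * Matrix.of (S ω))) μ) := by
    rw [integral_map hT.aemeasurable hg.aestronglyMeasurable]
    apply integral_congr_ae
    filter_upwards with ω
    congr 1
  rw [e1, hinv Q hQ, integral_map hS.aemeasurable hg.aestronglyMeasurable]

lemma inv_perm (hS : Measurable S)
    (hinv : ∀ Q : Matrix (Fin n) (Fin n) ℝ, Qᵀ * Q = 1 →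
      Measure.map (fun ω => Matrix.of.symm (Q * Matrix.of (S ω))) μ = Measure.map S μ)
    (σ : Equiv.Perm (Fin n))
    (g : (Fin n → Fin n → ℝ) → ℝ) (hg : Measurable g) :
    ∫ ω, g (fun i j => S ω (σ i) j) ∂μ = ∫ ω, g (S ω) ∂μ := by
  set Q : Matrix (Fin n) (Fin n) ℝ := Matrix.of fun i k => if σ i = k then 1 else 0 with hQdef
  have hQ : Qᵀ * Q = 1 := by
    ext k l
    have e0 : (Qᵀ * Q) k l
        = ∑ i, (fun x => (if x = k then (1:ℝ) else 0) * (if x = l then 1 else 0)) (σ i) := by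
      simp only [Matrix.mul_apply, Matrix.transpose_apply, hQdef, Matrix.of_apply]
    rw [e0, Equiv.sum_comp σ (fun x => (if x = k then (1:ℝ) else 0) * (if x = l then 1 else 0))]
    have h2 : ∀ x : Fin n, (if x = k then (1:ℝ) else 0) * (if x = l then 1 else 0)
        = if x = k then (if k = l then 1 else 0) else 0 := by
      intro x; by_cases hx : x = k <;> simp [hx]
    rw [Finset.sum_congr rfl fun x _ => h2 x]
    simp [Matrix.one_apply, Finset.sum_ite_eq']
  have h := inv_int hS hinv Q hQ g hg
  rw [← h]
  apply integral_congr_ae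
  filter_upwards with ω
  congr 1
  funext i j
  simp [hQdef]

lemma inv_sign (hS : Measurable S)
    (hinv : ∀ Q : Matrix (Fin n) (Fin n) ℝ, Qᵀ * Q = 1 →
      Measure.map (fun ω => Matrix.of.symm (Q * Matrix.of (S ω))) μ = Measure.map S μ)
    (r : Fin n)
    (g : (Fin n → Fin n → ℝ) → ℝ) (hg : Measurable g) :
    ∫ ω, g (fun i j => (if i = r then -1 else 1) * S ω i j) ∂μ = ∫ ω, g (S ω) ∂μ := by
  set Q : Matrix (Fin n) (Fin n) ℝ :=
    Matrix.of fun i k => if i = k then (if i = r then -1 else 1) else 0 with hQdef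
  have hQ : Qᵀ * Q = 1 := by
    ext k l
    have e0 : (Qᵀ * Q) k l = ∑ i, Q i k * Q i l := by
      simp [Matrix.mul_apply, Matrix.transpose_apply]
    rw [e0]
    by_cases h : k = l
    · subst h
      rw [Finset.sum_eq_single k]
      · by_cases hk : k = r <;> simp [hQdef, hk, Matrix.one_apply]
      · intro i _ hi; simp [hQdef, hi]
      · simp
    · rw [Matrix.one_apply, if_neg h]
      apply Finset.sum_eq_zero
      intro i _
      by_cases h1 : i = k
      · subst h1; simp [hQdef, h]
      · simp [hQdef, h1]
  have h := inv_int hS hinv Q hQ g hg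
  rw [← h]
  apply integral_congr_ae
  filter_upwards with ω
  congr 1
  funext i j
  rw [Finset.sum_eq_single i]
  · simp [hQdef]
  · intro k _ hk; simp [hQdef, Ne.symm hk]
  · simp

lemma sign_vanish (hS : Measurable S)
    (hinv : ∀ Q : Matrix (Fin n) (Fin n) ℝ, Qᵀ * Q = 1 →
      Measure.map (fun ω => Matrix.of.symm (Q * Matrix.of (S ω))) μ = Measure.map S μ)
    (r : Fin n) (g : (Fin n → Fin n → ℝ) → ℝ) (hg : Measurable g)
    (hodd : ∀ M : Fin n → Fin n → ℝ,
      g (fun i j => (if i = r then -1 else 1) * M i j) = - g M) :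
    ∫ ω, g (S ω) ∂μ = 0 := by
  have h := inv_sign hS hinv r g hg
  have h2 : ∫ ω, g (fun i j => (if i = r then (-1:ℝ) else 1) * S ω i j) ∂μ
      = ∫ ω, - g (S ω) ∂μ := by
    apply integral_congr_ae
    filter_upwards with ω
    exact hodd (S ω)
  rw [h2, integral_neg] at h
  linarith

lemma inv_rot (hS : Measurable S)
    (hinv : ∀ Q : Matrix (Fin n) (Fin n) ℝ, Qᵀ * Q = 1 →
      Measure.map (fun ω => Matrix.of.symm (Q * Matrix.of (S ω))) μ = Measure.map S μ)
    (z o : Fin n) (hzo : z ≠ o)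
    (g : (Fin n → Fin n → ℝ) → ℝ) (hg : Measurable g) :
    ∫ ω, g (fun i j => if i = z then rc * (S ω z j - S ω o j)
        else if i = o then rc * (S ω z j + S ω o j) else S ω i j) ∂μ
      = ∫ ω, g (S ω) ∂μ := by
  set Q : Matrix (Fin n) (Fin n) ℝ := Matrix.of fun i k =>
    if i = z then (if k = z then rc else if k = o then -rc else 0)
    else if i = o then (if k = z then rc else if k = o then rc else 0)
    else if i = k then 1 else 0 with hQdef
  have hoz : ¬(o = z) := fun h => hzo h.symm
  have hrow : ∀ (v : Fin n → ℝ) (i : Fin n), ∑ k, Q i k * v k =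
      if i = z then rc * (v z - v o)
      else if i = o then rc * (v z + v o) else v i := by
    intro v i
    by_cases hiz : i = z
    · rw [if_pos hiz, hiz]
      rw [Finset.sum_eq_add_of_mem z o (Finset.mem_univ _) (Finset.mem_univ _) hzo
        (fun c _ hc => by simp [hQdef, hc.1, hc.2])]
      simp [hQdef, hoz]
      ring
    · by_cases hio : i = o
      · rw [if_neg hiz, if_pos hio, hio]
        rw [Finset.sum_eq_add_of_mem z o (Finset.mem_univ _) (Finset.mem_univ _) hzo
          (fun c _ hc => by simp [hQdef, hoz, hc.1, hc.2])]
        simp [hQdef, hoz]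
        ring
      · rw [if_neg hiz, if_neg hio]
        rw [Finset.sum_eq_single i]
        · simp [hQdef, hiz, hio]
        · intro k _ hk
          simp [hQdef, hiz, hio, Ne.symm hk]
        · simp
  have hQ : Qᵀ * Q = 1 := by
    ext k l
    have e0 : (Qᵀ * Q) k l = ∑ i, Q i k * Q i l := by
      simp [Matrix.mul_apply, Matrix.transpose_apply]
    rw [e0, ← Finset.sum_filter_add_sum_filter_not Finset.univ (fun i => i = z ∨ i = o)
        (fun i => Q i k * Q i l)]
    have hf1 : Finset.univ.filter (fun i : Fin n => i = z ∨ i = o) = {z, o} := by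
      ext i; simp
    have hf2 : ∑ i ∈ Finset.univ.filter (fun i : Fin n => ¬(i = z ∨ i = o)), Q i k * Q i l
        = if k ∈ Finset.univ.filter (fun i : Fin n => ¬(i = z ∨ i = o))
            then (if k = l then (1:ℝ) else 0) else 0 := by
      rw [Finset.sum_congr rfl (fun i hi => ?_), Finset.sum_ite_eq'
        (Finset.univ.filter (fun i : Fin n => ¬(i = z ∨ i = o))) k
        (fun _ => if k = l then (1:ℝ) else 0)]
      have hi' : ¬(i = z ∨ i = o) := by simpa using (Finset.mem_filter.mp hi).2
      push_neg at hi'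
      have hQi : ∀ m, Q i m = if i = m then (1:ℝ) else 0 := fun m => by
        simp [hQdef, hi'.1, hi'.2]
      rw [hQi k, hQi l]
      by_cases hik : i = k
      · subst hik
        by_cases hil : i = l <;> simp [hil]
      · simp [hik]
    rw [hf1, Finset.sum_pair hzo, hf2]
    have hQz : ∀ m, Q z m = if m = z then rc else if m = o then -rc else 0 := by
      intro m; simp [hQdef]
    have hQo : ∀ m, Q o m = if m = z then rc else if m = o then rc else 0 := by
      intro m; simp [hQdef, hoz]
    rw [hQz k, hQz l, hQo k, hQo l]
    simp only [Finset.mem_filter, Finset.mem_univ, true_and, Matrix.one_apply]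
    by_cases hkz : k = z <;> by_cases hko : k = o <;> by_cases hlz : l = z <;>
        by_cases hlo : l = o <;>
      first
        | exact absurd (hkz.symm.trans hko) hzo
        | exact absurd (hlz.symm.trans hlo) hzo
        | (simp [hkz, hko, hlz, hlo, hzo, hoz, Ne.symm hzo, eq_comm] <;>
            first
              | linarith [rc_sq]
              | nlinarith [rc_sq]
              | ring1
              | (ring_nf; linarith [rc_sq])
              | (have h2 : ¬(z = l) := fun h => hlz h.symm
                 have h3 : ¬(o = l) := fun h => hlo h.symm
                 simp [h2, h3])
              | (have h2 : ¬(z = l) := fun h => hlz h.symm; simp [h2])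
              | (have h2 : ¬(o = l) := fun h => hlo h.symm; simp [h2]))
  have h := inv_int hS hinv Q hQ g hg
  rw [← h]
  apply integral_congr_ae
  filter_upwards with ω
  congr 1
  funext i j
  exact (hrow (fun k => S ω k j) i).symm

lemma perm4 (hS : Measurable S)
    (hinv : ∀ Q : Matrix (Fin n) (Fin n) ℝ, Qᵀ * Q = 1 →
      Measure.map (fun ω => Matrix.of.symm (Q * Matrix.of (S ω))) μ = Measure.map S μ)
    (σ : Equiv.Perm (Fin n)) (r1 r2 r3 r4 c1 c2 c3 c4 : Fin n) :
    ∫ ω, S ω (σ r1) c1 * S ω (σ r2) c2 * S ω (σ r3) c3 * S ω (σ r4) c4 ∂μ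
      = ∫ ω, S ω r1 c1 * S ω r2 c2 * S ω r3 c3 * S ω r4 c4 ∂μ :=
  inv_perm hS hinv σ (fun M => M r1 c1 * M r2 c2 * M r3 c3 * M r4 c4) (meas4 _ _ _ _ _ _ _ _)

lemma perm2 (hS : Measurable S)
    (hinv : ∀ Q : Matrix (Fin n) (Fin n) ℝ, Qᵀ * Q = 1 →
      Measure.map (fun ω => Matrix.of.symm (Q * Matrix.of (S ω))) μ = Measure.map S μ)
    (σ : Equiv.Perm (Fin n)) (r1 r2 c1 c2 : Fin n) :
    ∫ ω, S ω (σ r1) c1 * S ω (σ r2) c2 ∂μ = ∫ ω, S ω r1 c1 * S ω r2 c2 ∂μ :=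
  inv_perm hS hinv σ (fun M => M r1 c1 * M r2 c2) (meas2 _ _ _ _)

end OrthoAux

/-- Let `S` be a Haar-uniform random orthogonal matrix in `ℝ^{n×n}` (its law is invariant
under left multiplication by any fixed orthogonal matrix), and let `U = √n·S₁`,
`Z = √n·S₂` be its first two scaled columns, so `U, Z` are uniform on `√n·S^{n−1}` with
`UᵀZ = 0` a.s. Then `E[U₁² Z₁²] = n/(n+2)` and, for `1 ≤ d ≤ n`,
`E[(U_{[d]}ᵀ Z_{[d]})²] = d·n·(n−d)/((n+2)(n−1))`. -/
theorem orthogonal_columns_projected_correlation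
    {Ω : Type*} [MeasurableSpace Ω] (μ : Measure Ω) [IsProbabilityMeasure μ]
    (n : ℕ) (hn : 2 ≤ n) (d : ℕ) (hd1 : 1 ≤ d) (hdn : d ≤ n)
    (S : Ω → (Fin n → Fin n → ℝ)) (hS : Measurable S)
    (horth : ∀ᵐ ω ∂μ, (Matrix.of (S ω))ᵀ * Matrix.of (S ω) = 1)
    (hinv : ∀ Q : Matrix (Fin n) (Fin n) ℝ, Qᵀ * Q = 1 →
      Measure.map (fun ω => Matrix.of.symm (Q * Matrix.of (S ω))) μ = Measure.map S μ)
    (U Z : Ω → (Fin n → ℝ))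
    (hU : ∀ ω i, U ω i = Real.sqrt n * S ω i ⟨0, by omega⟩)
    (hZ : ∀ ω i, Z ω i = Real.sqrt n * S ω i ⟨1, by omega⟩) :
    (∫ ω, (U ω ⟨0, by omega⟩) ^ 2 * (Z ω ⟨0, by omega⟩) ^ 2 ∂μ = (n : ℝ) / (n + 2)) ∧
      ∫ ω, (∑ i ∈ Finset.univ.filter (fun i : Fin n => (i : ℕ) < d), U ω i * Z ω i) ^ 2 ∂μ
        = (d : ℝ) * n * ((n : ℝ) - d) / (((n : ℝ) + 2) * ((n : ℝ) - 1)) := by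
  classical
  have hn0 : (0:ℕ) < n := by omega
  have hn1 : (1:ℕ) < n := by omega
  set z : Fin n := ⟨0, hn0⟩ with hzdef
  set o : Fin n := ⟨1, hn1⟩ with hodef
  have hzo : z ≠ o := by simp [hzdef, hodef, Fin.ext_iff]
  have ir : ∀ f g : Ω → ℝ, (∀ ω, f ω = g ω) → ∫ ω, f ω ∂μ = ∫ ω, g ω ∂μ :=
    fun f g h => integral_congr_ae (Filter.Eventually.of_forall h)
  set xi := ∫ ω, S ω z z * S ω z z * S ω z o * S ω z o ∂μ with hxidef
  set nu := ∫ ω, S ω z z * S ω z o * S ω o z * S ω o o ∂μ with hnudef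
  set mm := ∫ ω, S ω z o * S ω z o * S ω o z * S ω o z ∂μ with hmmdef
  set pp := ∫ ω, S ω z o * S ω z o ∂μ with hppdef
  -- exchangeability
  have hxi_i : ∀ i : Fin n, ∫ ω, S ω i z * S ω i z * S ω i o * S ω i o ∂μ = xi := by
    intro i
    have h := OrthoAux.perm4 hS hinv (Equiv.swap z i) z z z z z z o o
    rwa [Equiv.swap_apply_left] at h
  have perm_pair : ∀ i j : Fin n, i ≠ j → ∃ σ : Equiv.Perm (Fin n), σ z = i ∧ σ o = j := by
    intro i j hij
    refine ⟨(Equiv.swap z i).trans (Equiv.swap ((Equiv.swap z i) o) j), ?_, ?_⟩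
    · simp only [Equiv.trans_apply, Equiv.swap_apply_left]
      apply Equiv.swap_apply_of_ne_of_ne
      · intro h
        exact hzo ((Equiv.swap z i).injective ((Equiv.swap_apply_left z i).trans h))
      · exact hij
    · simp only [Equiv.trans_apply, Equiv.swap_apply_left]
  have hnu_ij : ∀ i j : Fin n, i ≠ j →
      ∫ ω, S ω i z * S ω i o * S ω j z * S ω j o ∂μ = nu := by
    intro i j hij
    obtain ⟨σ, h1, h2⟩ := perm_pair i j hij
    have h := OrthoAux.perm4 hS hinv σ z z o o z o z o
    rwa [h1, h2] at h
  have hmm_i : ∀ i : Fin n, i ≠ z →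
      ∫ ω, S ω z o * S ω z o * S ω i z * S ω i z ∂μ = mm := by
    intro i hiz
    have h := OrthoAux.perm4 hS hinv (Equiv.swap o i) z z o o o o z z
    rwa [Equiv.swap_apply_left,
      Equiv.swap_apply_of_ne_of_ne hzo (Ne.symm hiz)] at h
  have hpp_i : ∀ i : Fin n, ∫ ω, S ω i o * S ω i o ∂μ = pp := by
    intro i
    have h := OrthoAux.perm2 hS hinv (Equiv.swap z i) z z o o
    rwa [Equiv.swap_apply_left] at h
  -- eq1 : n * pp = 1
  have eq1 : (n:ℝ) * pp = 1 := by
    have hsum : ∫ ω, ∑ i, S ω i o * S ω i o ∂μ = 1 := by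
      have h0 : ∀ᵐ ω ∂μ, ∑ i, S ω i o * S ω i o = 1 := by
        filter_upwards [OrthoAux.col_orth horth o o] with ω h
        simpa using h
      rw [integral_congr_ae h0, integral_const]
      simp
    rw [integral_finset_sum _ (fun i _ => OrthoAux.int2 hS horth i o i o),
      Finset.sum_congr rfl (fun i _ => hpp_i i), Finset.sum_const, Finset.card_univ,
      Fintype.card_fin, nsmul_eq_mul] at hsum
    exact hsum
  have hcast : ((n - 1 : ℕ) : ℝ) = (n:ℝ) - 1 := by
    push_cast [Nat.cast_sub (by omega : 1 ≤ n)]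
    ring
  -- eq2 : xi + (n-1) mm = pp
  have eq2 : xi + ((n:ℝ) - 1) * mm = pp := by
    have hsum : ∫ ω, ∑ i, S ω z o * S ω z o * S ω i z * S ω i z ∂μ = pp := by
      have h0 : ∀ᵐ ω ∂μ, ∑ i, S ω z o * S ω z o * S ω i z * S ω i z
          = S ω z o * S ω z o := by
        filter_upwards [OrthoAux.col_orth horth z z] with ω h
        have h' : ∑ i, S ω i z * S ω i z = 1 := by simpa using h
        calc ∑ i, S ω z o * S ω z o * S ω i z * S ω i z
            = (S ω z o * S ω z o) * ∑ i, S ω i z * S ω i z := by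
              rw [Finset.mul_sum]
              exact Finset.sum_congr rfl (fun i _ => by ring)
          _ = S ω z o * S ω z o := by rw [h']; ring
      rw [integral_congr_ae h0]
    rw [integral_finset_sum _ (fun i _ => OrthoAux.int4 hS horth z o z o i z i z),
      ← Finset.add_sum_erase _ _ (Finset.mem_univ z),
      Finset.sum_congr rfl (fun i hi => hmm_i i (Finset.mem_erase.mp hi).1),
      Finset.sum_const, Finset.card_erase_of_mem (Finset.mem_univ z), Finset.card_univ,
      Fintype.card_fin, nsmul_eq_mul] at hsum
    have t1 : ∫ ω, S ω z o * S ω z o * S ω z z * S ω z z ∂μ = xi :=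
      (ir _ _ (fun ω => by ring)).trans hxidef.symm
    rw [t1, hcast] at hsum
    exact hsum
  -- eq3 : xi + (n-1) nu = 0
  have eq3 : xi + ((n:ℝ) - 1) * nu = 0 := by
    have hsum : ∫ ω, ∑ i, S ω z z * S ω z o * S ω i z * S ω i o ∂μ = 0 := by
      have h0 : ∀ᵐ ω ∂μ, ∑ i, S ω z z * S ω z o * S ω i z * S ω i o = 0 := by
        filter_upwards [OrthoAux.col_orth horth z o] with ω h
        have h' : ∑ i, S ω i z * S ω i o = 0 := by
          rw [h, if_neg hzo]
        calc ∑ i, S ω z z * S ω z o * S ω i z * S ω i o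
            = (S ω z z * S ω z o) * ∑ i, S ω i z * S ω i o := by
              rw [Finset.mul_sum]
              exact Finset.sum_congr rfl (fun i _ => by ring)
          _ = 0 := by rw [h']; ring
      rw [integral_congr_ae h0, integral_zero]
    rw [integral_finset_sum _ (fun i _ => OrthoAux.int4 hS horth z z z o i z i o),
      ← Finset.add_sum_erase _ _ (Finset.mem_univ z),
      Finset.sum_congr rfl
        (fun i hi => hnu_ij z i (Ne.symm (Finset.mem_erase.mp hi).1)),
      Finset.sum_const, Finset.card_erase_of_mem (Finset.mem_univ z), Finset.card_univ,
      Fintype.card_fin, nsmul_eq_mul] at hsum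
    have t1 : ∫ ω, S ω z z * S ω z o * S ω z z * S ω z o ∂μ = xi :=
      (ir _ _ (fun ω => by ring)).trans hxidef.symm
    rw [t1, hcast] at hsum
    exact hsum
  -- integrability of the nine fourth-moment monomials
  have iF1 := OrthoAux.int4 hS horth z z z z z o z o (μ := μ)
  have iF2 := OrthoAux.int4 hS horth z z z z z o o o (μ := μ)
  have iF3 := OrthoAux.int4 hS horth z z z z o o o o (μ := μ)
  have iF4 := OrthoAux.int4 hS horth z z o z z o z o (μ := μ)
  have iF5 := OrthoAux.int4 hS horth z z o z z o o o (μ := μ)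
  have iF6 := OrthoAux.int4 hS horth z z o z o o o o (μ := μ)
  have iF7 := OrthoAux.int4 hS horth o z o z z o z o (μ := μ)
  have iF8 := OrthoAux.int4 hS horth o z o z z o o o (μ := μ)
  have iF9 := OrthoAux.int4 hS horth o z o z o o o o (μ := μ)
  -- values of the nine monomial integrals
  have vF1 : ∫ ω, S ω z z * S ω z z * S ω z o * S ω z o ∂μ = xi := hxidef.symm
  have vF2 : ∫ ω, S ω z z * S ω z z * S ω z o * S ω o o ∂μ = 0 := by
    apply OrthoAux.sign_vanish hS hinv o (fun M => M z z * M z z * M z o * M o o)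
      (OrthoAux.meas4 _ _ _ _ _ _ _ _)
    intro M
    simp only [if_neg hzo, eq_self_iff_true, if_true]
    ring
  have vF3 : ∫ ω, S ω z z * S ω z z * S ω o o * S ω o o ∂μ = mm := by
    have h := OrthoAux.perm4 hS hinv (Equiv.swap z o) z z o o z z o o
    rw [Equiv.swap_apply_left, Equiv.swap_apply_right] at h
    rw [← h]
    exact (ir _ _ (fun ω => by ring)).trans hmmdef.symm
  have vF4 : ∫ ω, S ω z z * S ω o z * S ω z o * S ω z o ∂μ = 0 := by
    apply OrthoAux.sign_vanish hS hinv o (fun M => M z z * M o z * M z o * M z o)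
      (OrthoAux.meas4 _ _ _ _ _ _ _ _)
    intro M
    simp only [if_neg hzo, eq_self_iff_true, if_true]
    ring
  have vF5 : ∫ ω, S ω z z * S ω o z * S ω z o * S ω o o ∂μ = nu :=
    (ir _ _ (fun ω => by ring)).trans hnudef.symm
  have vF6 : ∫ ω, S ω z z * S ω o z * S ω o o * S ω o o ∂μ = 0 := by
    apply OrthoAux.sign_vanish hS hinv o (fun M => M z z * M o z * M o o * M o o)
      (OrthoAux.meas4 _ _ _ _ _ _ _ _)
    intro M
    simp only [if_neg hzo, eq_self_iff_true, if_true]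
    ring
  have vF7 : ∫ ω, S ω o z * S ω o z * S ω z o * S ω z o ∂μ = mm :=
    (ir _ _ (fun ω => by ring)).trans hmmdef.symm
  have vF8 : ∫ ω, S ω o z * S ω o z * S ω z o * S ω o o ∂μ = 0 := by
    apply OrthoAux.sign_vanish hS hinv o (fun M => M o z * M o z * M z o * M o o)
      (OrthoAux.meas4 _ _ _ _ _ _ _ _)
    intro M
    simp only [if_neg hzo, eq_self_iff_true, if_true]
    ring
  have vF9 : ∫ ω, S ω o z * S ω o z * S ω o o * S ω o o ∂μ = xi := by
    have h := OrthoAux.perm4 hS hinv (Equiv.swap z o) z z z z z z o o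
    rw [Equiv.swap_apply_left] at h
    exact h.trans hxidef.symm
  -- eq4 from rotation invariance
  have eq4 : 4 * xi = 2 * xi + 2 * mm + 4 * nu := by
    have hrot := OrthoAux.inv_rot hS hinv z o hzo
      (fun M => M z z * M z z * M z o * M z o) (OrthoAux.meas4 _ _ _ _ _ _ _ _)
    have hrot2 : ∫ ω, (OrthoAux.rc * (S ω z z - S ω o z)) * (OrthoAux.rc * (S ω z z - S ω o z))
        * (OrthoAux.rc * (S ω z o - S ω o o)) * (OrthoAux.rc * (S ω z o - S ω o o)) ∂μ
        = xi := by
      calc ∫ ω, (OrthoAux.rc * (S ω z z - S ω o z)) * (OrthoAux.rc * (S ω z z - S ω o z))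
          * (OrthoAux.rc * (S ω z o - S ω o o)) * (OrthoAux.rc * (S ω z o - S ω o o)) ∂μ
          = ∫ ω, (fun M : Fin n → Fin n → ℝ => M z z * M z z * M z o * M z o)
              (fun i j => if i = z then OrthoAux.rc * (S ω z j - S ω o j)
                else if i = o then OrthoAux.rc * (S ω z j + S ω o j) else S ω i j) ∂μ :=
            ir _ _ (fun ω => by simp)
        _ = ∫ ω, (fun M : Fin n → Fin n → ℝ => M z z * M z z * M z o * M z o) (S ω) ∂μ := hrot
        _ = xi := hxidef.symm
    have hpt : ∀ ω : Ω, (OrthoAux.rc * (S ω z z - S ω o z)) * (OrthoAux.rc * (S ω z z - S ω o z))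
        * (OrthoAux.rc * (S ω z o - S ω o o)) * (OrthoAux.rc * (S ω z o - S ω o o))
        = (1/4) * (S ω z z * S ω z z * S ω z o * S ω z o)
          - (1/2) * (S ω z z * S ω z z * S ω z o * S ω o o)
          + (1/4) * (S ω z z * S ω z z * S ω o o * S ω o o)
          - (1/2) * (S ω z z * S ω o z * S ω z o * S ω z o)
          + (S ω z z * S ω o z * S ω z o * S ω o o)
          - (1/2) * (S ω z z * S ω o z * S ω o o * S ω o o)
          + (1/4) * (S ω o z * S ω o z * S ω z o * S ω z o)
          - (1/2) * (S ω o z * S ω o z * S ω z o * S ω o o)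
          + (1/4) * (S ω o z * S ω o z * S ω o o * S ω o o) := by
      intro ω
      linear_combination (OrthoAux.rc * OrthoAux.rc + 1/2) *
        ((S ω z z - S ω o z) * (S ω z z - S ω o z) * (S ω z o - S ω o o)
          * (S ω z o - S ω o o)) * OrthoAux.rc_sq
    rw [ir _ _ hpt] at hrot2
    set G1 : Ω → ℝ := fun ω => (1/4 : ℝ) * (S ω z z * S ω z z * S ω z o * S ω z o) with hG1
    set G2 : Ω → ℝ := fun ω => (1/2 : ℝ) * (S ω z z * S ω z z * S ω z o * S ω o o) with hG2
    set G3 : Ω → ℝ := fun ω => (1/4 : ℝ) * (S ω z z * S ω z z * S ω o o * S ω o o) with hG3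
    set G4 : Ω → ℝ := fun ω => (1/2 : ℝ) * (S ω z z * S ω o z * S ω z o * S ω z o) with hG4
    set G5 : Ω → ℝ := fun ω => S ω z z * S ω o z * S ω z o * S ω o o with hG5
    set G6 : Ω → ℝ := fun ω => (1/2 : ℝ) * (S ω z z * S ω o z * S ω o o * S ω o o) with hG6
    set G7 : Ω → ℝ := fun ω => (1/4 : ℝ) * (S ω o z * S ω o z * S ω z o * S ω z o) with hG7
    set G8 : Ω → ℝ := fun ω => (1/2 : ℝ) * (S ω o z * S ω o z * S ω z o * S ω o o) with hG8
    set G9 : Ω → ℝ := fun ω => (1/4 : ℝ) * (S ω o z * S ω o z * S ω o o * S ω o o) with hG9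
    have q1 : Integrable G1 μ := iF1.const_mul _
    have q2 : Integrable G2 μ := iF2.const_mul _
    have q3 : Integrable G3 μ := iF3.const_mul _
    have q4 : Integrable G4 μ := iF4.const_mul _
    have q5 : Integrable G5 μ := iF5
    have q6 : Integrable G6 μ := iF6.const_mul _
    have q7 : Integrable G7 μ := iF7.const_mul _
    have q8 : Integrable G8 μ := iF8.const_mul _
    have q9 : Integrable G9 μ := iF9.const_mul _
    have p1 : Integrable (fun ω => G1 ω) μ := q1
    have p2 : Integrable (fun ω => G1 ω - G2 ω) μ := q1.sub q2
    have p3 : Integrable (fun ω => G1 ω - G2 ω + G3 ω) μ := p2.add q3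
    have p4 : Integrable (fun ω => G1 ω - G2 ω + G3 ω - G4 ω) μ := p3.sub q4
    have p5 : Integrable (fun ω => G1 ω - G2 ω + G3 ω - G4 ω + G5 ω) μ := p4.add q5
    have p6 : Integrable (fun ω => G1 ω - G2 ω + G3 ω - G4 ω + G5 ω - G6 ω) μ := p5.sub q6
    have p7 : Integrable (fun ω => G1 ω - G2 ω + G3 ω - G4 ω + G5 ω - G6 ω + G7 ω) μ :=
      p6.add q7
    have p8 : Integrable (fun ω => G1 ω - G2 ω + G3 ω - G4 ω + G5 ω - G6 ω + G7 ω - G8 ω) μ :=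
      p7.sub q8
    have hrw : ∫ ω, (G1 ω - G2 ω + G3 ω - G4 ω + G5 ω - G6 ω + G7 ω - G8 ω + G9 ω) ∂μ
        = ∫ ω, G1 ω ∂μ - ∫ ω, G2 ω ∂μ + ∫ ω, G3 ω ∂μ - ∫ ω, G4 ω ∂μ + ∫ ω, G5 ω ∂μ
          - ∫ ω, G6 ω ∂μ + ∫ ω, G7 ω ∂μ - ∫ ω, G8 ω ∂μ + ∫ ω, G9 ω ∂μ := by
      rw [integral_add p8 q9, integral_sub p7 q8, integral_add p6 q7, integral_sub p5 q6,
        integral_add p4 q5, integral_sub p3 q4, integral_add p2 q3, integral_sub p1 q2]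
    have hexp : ∫ ω, (G1 ω - G2 ω + G3 ω - G4 ω + G5 ω - G6 ω + G7 ω - G8 ω + G9 ω) ∂μ
        = xi := by
      rw [← hrot2]
    rw [hexp] at hrw
    rw [hG1, hG2, hG3, hG4, hG6, hG7, hG8, hG9] at hrw
    rw [integral_const_mul, integral_const_mul, integral_const_mul, integral_const_mul,
      integral_const_mul, integral_const_mul, integral_const_mul, integral_const_mul,
      vF1, vF2, vF3, vF4, vF6, vF7, vF8, vF9] at hrw
    rw [hG5, vF5] at hrw
    linarith
  -- solve for xi and nu
  have hnR : (2:ℝ) ≤ (n:ℝ) := by exact_mod_cast hn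
  have hne0 : (n:ℝ) ≠ 0 := by linarith
  have hne1 : (n:ℝ) - 1 ≠ 0 := by linarith
  have hne2 : (n:ℝ) + 2 ≠ 0 := by linarith
  have hppv : pp = 1 / (n:ℝ) := by
    field_simp
    linarith
  have hxiv : xi = 1 / ((n:ℝ) * ((n:ℝ) + 2)) := by
    have h5 : ((n:ℝ) + 2) * xi = pp := by
      linear_combination eq2 + (((n:ℝ) - 1)/2) * eq4 + 2 * eq3
    rw [hppv] at h5
    field_simp at h5 ⊢
    linarith
  have hnuv : nu = -(1 / ((n:ℝ) * ((n:ℝ) + 2) * ((n:ℝ) - 1))) := by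
    have h6 : ((n:ℝ) - 1) * nu = -xi := by linarith
    rw [hxiv] at h6
    field_simp at h6 ⊢
    linarith
  have hsq : Real.sqrt n * Real.sqrt n = (n:ℝ) :=
    Real.mul_self_sqrt (by positivity)
  constructor
  · -- first goal
    show ∫ ω, (U ω z) ^ 2 * (Z ω z) ^ 2 ∂μ = (n : ℝ) / ((n : ℝ) + 2)
    have e : ∫ ω, (U ω z) ^ 2 * (Z ω z) ^ 2 ∂μ
        = ∫ ω, ((n:ℝ) * (n:ℝ)) * (S ω z z * S ω z z * S ω z o * S ω z o) ∂μ := by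
      apply ir
      intro ω
      rw [hU, hZ]
      calc (Real.sqrt n * S ω z z) ^ 2 * (Real.sqrt n * S ω z o) ^ 2
          = (Real.sqrt n * Real.sqrt n) * (Real.sqrt n * Real.sqrt n)
            * (S ω z z * S ω z z * S ω z o * S ω z o) := by ring
        _ = ((n:ℝ) * (n:ℝ)) * (S ω z z * S ω z z * S ω z o * S ω z o) := by rw [hsq]
    rw [e, integral_const_mul, ← hxidef, hxiv]
    field_simp
  · -- second goal
    set F : Finset (Fin n) := Finset.univ.filter (fun i : Fin n => (i : ℕ) < d) with hFdef
    have hFcard : F.card = d := by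
      have : F = Finset.map (Fin.castLEEmb hdn) Finset.univ := by
        ext i
        simp only [hFdef, Finset.mem_filter, Finset.mem_univ, true_and, Finset.mem_map]
        constructor
        · intro h
          first
            | exact ⟨⟨(i : ℕ), h⟩, Finset.mem_univ _, Fin.ext rfl⟩
            | exact ⟨⟨(i : ℕ), h⟩, Fin.ext rfl⟩
        · rintro ⟨j, -, rfl⟩
          simpa using j.isLt
      rw [this, Finset.card_map, Finset.card_univ, Fintype.card_fin]
    have hUZ : ∀ (ω : Ω) (i : Fin n), U ω i * Z ω i
        = Real.sqrt n * Real.sqrt n * (S ω i z * S ω i o) := by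
      intro ω i
      rw [hU, hZ]
      ring
    have hpt2 : ∀ ω : Ω, (∑ i ∈ F, U ω i * Z ω i) ^ 2
        = ∑ i ∈ F, ∑ j ∈ F, ((n:ℝ) * (n:ℝ)) * (S ω i z * S ω i o * S ω j z * S ω j o) := by
      intro ω
      rw [sq, Finset.sum_mul_sum]
      apply Finset.sum_congr rfl
      intro i _
      apply Finset.sum_congr rfl
      intro j _
      rw [hUZ ω i, hUZ ω j, hsq]
      ring
    rw [ir _ _ hpt2, integral_finset_sum _ (fun i _ =>
      integrable_finset_sum _ (fun j _ => (OrthoAux.int4 hS horth i z i o j z j o).const_mul _))]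
    have hterm : ∀ i ∈ F, ∑ j ∈ F, ∫ ω,
        ((n:ℝ) * (n:ℝ)) * (S ω i z * S ω i o * S ω j z * S ω j o) ∂μ
        = ((n:ℝ) * (n:ℝ)) * ((xi - nu) + (d:ℝ) * nu) := by
      intro i hi
      have hval : ∀ j, ∫ ω, ((n:ℝ) * (n:ℝ)) * (S ω i z * S ω i o * S ω j z * S ω j o) ∂μ
          = ((n:ℝ) * (n:ℝ)) * (if i = j then xi else nu) := by
        intro j
        rw [integral_const_mul]
        congr 1
        by_cases hij : i = j
        · rw [if_pos hij, ← hij]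
          exact (ir _ _ (fun ω => by ring)).trans (hxi_i i)
        · rw [if_neg hij]
          exact hnu_ij i j hij
      rw [Finset.sum_congr rfl (fun j _ => hval j), ← Finset.mul_sum]
      congr 1
      have hsplit : ∀ j, (if i = j then xi else nu)
          = (if i = j then xi - nu else 0) + nu := by
        intro j
        by_cases h : i = j <;> simp [h]
      rw [Finset.sum_congr rfl (fun j _ => hsplit j), Finset.sum_add_distrib,
        Finset.sum_ite_eq F i (fun _ => xi - nu), if_pos hi, Finset.sum_const, hFcard,
        nsmul_eq_mul]
    have hswap : ∀ i ∈ F, ∫ ω, (∑ j ∈ F,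
        ((n:ℝ) * (n:ℝ)) * (S ω i z * S ω i o * S ω j z * S ω j o)) ∂μ
        = ∑ j ∈ F, ∫ ω, ((n:ℝ) * (n:ℝ)) * (S ω i z * S ω i o * S ω j z * S ω j o) ∂μ :=
      fun i _ => integral_finset_sum F
        (fun j _ => (OrthoAux.int4 hS horth i z i o j z j o).const_mul _)
    have hsum1 : ∑ i ∈ F, ∫ ω, (∑ j ∈ F,
        ((n:ℝ) * (n:ℝ)) * (S ω i z * S ω i o * S ω j z * S ω j o)) ∂μ
        = ∑ i ∈ F, ∑ j ∈ F, ∫ ω,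
          ((n:ℝ) * (n:ℝ)) * (S ω i z * S ω i o * S ω j z * S ω j o) ∂μ :=
      Finset.sum_congr rfl hswap
    rw [hsum1]
    have hsum2 : ∑ i ∈ F, ∑ j ∈ F, ∫ ω,
        ((n:ℝ) * (n:ℝ)) * (S ω i z * S ω i o * S ω j z * S ω j o) ∂μ
        = ∑ _i ∈ F, ((n:ℝ) * (n:ℝ)) * ((xi - nu) + (d:ℝ) * nu) :=
      Finset.sum_congr rfl hterm
    rw [hsum2, Finset.sum_const, hFcard, nsmul_eq_mul, hxiv, hnuv]
    field_simp
    ring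
end

section
/- Let U be uniform on √n·S^{n−1} ⊂ ℝⁿ and U_{[d]} its projection to the first d coordinates, 1 ≤ d ≤ n. Then for any 0 < ε < 1, Pr(‖U_{[d]}‖² > (1+ε)d) ≤ 2·exp(−(ε/(1+ε))²·d/24) ≤ 2·exp(−ε²·d/96). -/
open MeasureTheory ProbabilityTheory

open Real
open scoped ENNReal NNReal

lemma exp_cubic_lb {x : ℝ} (hx : |x| ≤ 1) :
    1 + x + x^2/2 - (2/9)*|x|^3 ≤ Real.exp x := by
  have h := Real.exp_bound hx (n := 3) (by norm_num)
  have hs : ∑ m ∈ Finset.range 3, x ^ m / m.factorial = 1 + x + x^2/2 := by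
    simp [Finset.sum_range_succ, Nat.factorial]
  rw [hs] at h
  have h2 := (abs_sub_le_iff.1 h).2
  norm_num [Nat.factorial] at h2 ⊢
  linarith

lemma poly_upper {a : ℝ} (h0 : 0 < a) (h3 : a ≤ 1/3) :
    1 + a ≤ Real.exp (a - a^2/(3*(1+a)^2)) := by
  set q : ℝ := a^2/(3*(1+a)^2) with hq
  have hqpos : 0 < q := by positivity
  have hql : q ≤ a^2/3 := by
    rw [hq]
    apply div_le_div_of_nonneg_left (by positivity) (by norm_num) ?_
    nlinarith
  have hy0 : 0 ≤ a - q := by nlinarith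
  have hy1 : |a - q| ≤ 1 := by rw [abs_of_nonneg hy0]; nlinarith
  have h := exp_cubic_lb hy1
  rw [abs_of_nonneg hy0] at h
  have hq2 : q * (3*(1+a)^2) = a^2 := by rw [hq]; exact div_mul_cancel₀ _ (by positivity)
  nlinarith [sq_nonneg (a - q), sq_nonneg a, sq_nonneg (a*q), hqpos.le, sq_nonneg q]

lemma poly_lower {a : ℝ} (h0 : 0 < a) (h3 : a ≤ 1/3) :
    1 - a ≤ Real.exp (-(a + a^2/(3*(1+a)^2))) := by
  set q : ℝ := a^2/(3*(1+a)^2) with hq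
  have hqpos : 0 < q := by positivity
  have hql : q ≤ a^2/3 := by
    rw [hq]
    apply div_le_div_of_nonneg_left (by positivity) (by norm_num) ?_
    nlinarith
  have hx0 : 0 ≤ a + q := by positivity
  have hx1 : |(-(a+q))| ≤ 1 := by rw [abs_neg, abs_of_nonneg hx0]; nlinarith
  have h := exp_cubic_lb hx1
  rw [abs_neg, abs_of_nonneg hx0] at h
  have key : q ≤ (a+q)^2/2 - (2/9)*(a+q)^3 := by
    nlinarith [mul_nonneg h0.le hqpos.le, sq_nonneg q, mul_nonneg (mul_nonneg h0.le h0.le) hqpos.le,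
      mul_nonneg (mul_nonneg hqpos.le hqpos.le) hqpos.le, mul_nonneg (mul_nonneg h0.le hqpos.le) hqpos.le,
      mul_le_mul_of_nonneg_left hql (mul_nonneg h0.le h0.le), mul_le_mul_of_nonneg_left hql hqpos.le,
      mul_le_mul_of_nonneg_left hql h0.le]
  nlinarith [key]

lemma gauss_point {t : ℝ} (x : ℝ) :
    (gaussianPDFReal 0 1 x) * Real.exp (t * x^2)
      = (Real.sqrt (2 * π))⁻¹ * Real.exp (-(1/2 - t) * x^2) := by
  simp only [gaussianPDFReal, NNReal.coe_one, mul_one, sub_zero]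
  rw [mul_assoc, ← Real.exp_add]
  ring_nf

lemma gauss_density_eq : gaussianReal 0 1
    = MeasureTheory.volume.withDensity (fun x => ((gaussianPDFReal 0 1 x).toNNReal : ℝ≥0∞)) := by
  rw [gaussianReal_of_var_ne_zero _ one_ne_zero]
  rfl

lemma gauss_sq_integrable {t : ℝ} (ht : t < 1/2) :
    Integrable (fun x => Real.exp (t * x^2)) (gaussianReal 0 1) := by
  rw [gauss_density_eq,
    integrable_withDensity_iff_integrable_smul ((measurable_gaussianPDFReal 0 1).real_toNNReal)]
  have : (fun x => ((gaussianPDFReal 0 1 x).toNNReal : ℝ≥0) • Real.exp (t * x^2))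
      = fun x => (Real.sqrt (2 * π))⁻¹ * Real.exp (-(1/2 - t) * x^2) := by
    funext x
    rw [NNReal.smul_def, smul_eq_mul, Real.coe_toNNReal _ (gaussianPDFReal_nonneg 0 1 x),
      gauss_point]
  rw [this]
  exact (integrable_exp_neg_mul_sq (by linarith)).const_mul _

lemma gauss_sq_integral {t : ℝ} (ht : t < 1/2) :
    ∫ x, Real.exp (t * x^2) ∂(gaussianReal 0 1) = (Real.sqrt (1 - 2*t))⁻¹ := by
  have hb : (0:ℝ) < 1/2 - t := by linarith
  rw [gauss_density_eq,
    integral_withDensity_eq_integral_smul ((measurable_gaussianPDFReal 0 1).real_toNNReal)]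
  have : (fun x => ((gaussianPDFReal 0 1 x).toNNReal : ℝ≥0) • Real.exp (t * x^2))
      = fun x => (Real.sqrt (2 * π))⁻¹ * Real.exp (-(1/2 - t) * x^2) := by
    funext x
    rw [NNReal.smul_def, smul_eq_mul, Real.coe_toNNReal _ (gaussianPDFReal_nonneg 0 1 x),
      gauss_point]
  rw [this, integral_const_mul, integral_gaussian]
  have h1 : (1:ℝ) - 2*t = 2*(1/2 - t) := by ring
  rw [h1, Real.sqrt_mul (by norm_num : (0:ℝ) ≤ 2), Real.sqrt_div pi_pos.le,
    Real.sqrt_mul (by norm_num : (0:ℝ) ≤ 2)]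
  have hpi : Real.sqrt π ≠ 0 := by positivity
  have h2 : Real.sqrt 2 ≠ 0 := by positivity
  have h3 : Real.sqrt (1/2 - t) ≠ 0 := by positivity
  field_simp

lemma sqrt_exp_eq (x : ℝ) : Real.sqrt (Real.exp x) = Real.exp (x/2) := by
  rw [show Real.exp x = (Real.exp (x/2))^2 by rw [pow_two, ← Real.exp_add, add_halves]]
  exact Real.sqrt_sq (Real.exp_nonneg _)

set_option maxHeartbeats 1000000 in
/-- Tail bound for the projected sphere vector: if `U = √n·Z/‖Z‖` is uniform on
`√n·S^{n−1}` and `U_{[d]}` is its projection to the first `d` coordinates, then for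
`0 < ε < 1`, `Pr(‖U_{[d]}‖² > (1+ε)d) ≤ 2·exp(−(ε/(1+ε))²·d/24) ≤ 2·exp(−ε²·d/96)`. -/
theorem sphere_projection_tail_bound
    {Ω : Type*} [MeasurableSpace Ω] (μ : Measure Ω) [IsProbabilityMeasure μ]
    (n d : ℕ) (hd1 : 1 ≤ d) (hdn : d ≤ n)
    (Z : Ω → (Fin n → ℝ)) (hZ : Measurable Z)
    (hgauss : ∀ i, Measure.map (fun ω => Z ω i) μ = gaussianReal 0 1)
    (hiid : iIndepFun (fun i ω => Z ω i) μ)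
    (U : Ω → (Fin n → ℝ))
    (hU : ∀ ω i, U ω i = Real.sqrt n * Z ω i / Real.sqrt (∑ j, (Z ω j) ^ 2))
    (ε : ℝ) (hε0 : 0 < ε) (hε1 : ε < 1) :
    μ {ω | (1 + ε) * d < ∑ i ∈ Finset.univ.filter (fun i : Fin n => (i : ℕ) < d), (U ω i) ^ 2}
        ≤ ENNReal.ofReal (2 * Real.exp (-(ε / (1 + ε)) ^ 2 * d / 24)) ∧
      2 * Real.exp (-(ε / (1 + ε)) ^ 2 * d / 24) ≤ 2 * Real.exp (-ε ^ 2 * d / 96) := by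
  classical
  have hn1 : 1 ≤ n := hd1.trans hdn
  have hnpos : (0:ℝ) < n := by exact_mod_cast hn1
  have hdpos : (0:ℝ) < d := by exact_mod_cast hd1
  constructor
  · -- main bound
    obtain ⟨a, ha_def⟩ : ∃ a : ℝ, a = ε / (2 + ε) := ⟨_, rfl⟩
    have ha0 : 0 < a := by rw [ha_def]; positivity
    have ha3 : a ≤ 1/3 := by
      rw [ha_def, div_le_iff₀ (by linarith)]; linarith
    have ha1 : a < 1 := lt_of_le_of_lt ha3 (by norm_num)
    have h1a : (1:ℝ) + a ≠ 0 := by linarith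
    have h1a' : (1:ℝ) - a ≠ 0 := by linarith
    obtain ⟨q, hq_def⟩ : ∃ q : ℝ, q = a^2/(3*(1+a)^2) := ⟨_, rfl⟩
    have hδ12 : (ε/(1+ε))^2 / 12 = q := by
      rw [hq_def, ha_def]
      rw [div_pow, div_pow, div_div, div_div,
        div_eq_div_iff (by positivity) (by positivity)]
      field_simp
      ring
    -- scalar inequalities
    have hscal1 : Real.exp (-(a/2)) * Real.sqrt (1+a) ≤ Real.exp (-((ε/(1+ε))^2/24)) := by
      have key := Real.sqrt_le_sqrt (poly_upper ha0 ha3)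
      rw [sqrt_exp_eq, ← hq_def] at key
      calc Real.exp (-(a/2)) * Real.sqrt (1+a)
          ≤ Real.exp (-(a/2)) * Real.exp ((a - q)/2) :=
            mul_le_mul_of_nonneg_left key (Real.exp_nonneg _)
        _ = Real.exp (-((ε/(1+ε))^2/24)) := by
            rw [← Real.exp_add]; congr 1
            have h24 : (ε/(1+ε))^2/24 = q/2 := by linarith
            rw [h24]; ring
    have hscal2 : Real.exp (a/2) * Real.sqrt (1-a) ≤ Real.exp (-((ε/(1+ε))^2/24)) := by
      have key := Real.sqrt_le_sqrt (poly_lower ha0 ha3)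
      rw [sqrt_exp_eq, ← hq_def] at key
      calc Real.exp (a/2) * Real.sqrt (1-a)
          ≤ Real.exp (a/2) * Real.exp ((-(a + q))/2) :=
            mul_le_mul_of_nonneg_left key (Real.exp_nonneg _)
        _ = Real.exp (-((ε/(1+ε))^2/24)) := by
            rw [← Real.exp_add]; congr 1
            have h24 : (ε/(1+ε))^2/24 = q/2 := by linarith
            rw [h24]; ring
    -- random variables
    set Y : Fin n → Ω → ℝ := fun i ω => (Z ω i)^2 with hY_def
    have hZi : ∀ i, Measurable (fun ω => Z ω i) := fun i => (measurable_pi_apply i).comp hZ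
    have hYmeas : ∀ i, Measurable (Y i) := fun i => (hZi i).pow_const 2
    have hYindep : iIndepFun Y μ :=
      hiid.comp (fun _ => fun x : ℝ => x^2) (fun _ => measurable_id.pow_const 2)
    have hexpmeas : ∀ t : ℝ, Measurable (fun x : ℝ => Real.exp (t * x^2)) := by
      intro t
      exact (measurable_id.pow_const 2).const_mul t |>.exp
    have hint : ∀ (t : ℝ), t < 1/2 → ∀ i, Integrable (fun ω => Real.exp (t * Y i ω)) μ := by
      intro t ht i
      have h1 : Integrable (fun x => Real.exp (t * x^2)) (Measure.map (fun ω => Z ω i) μ) := by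
        rw [hgauss i]; exact gauss_sq_integrable ht
      exact (integrable_map_measure (hexpmeas t).aestronglyMeasurable
        (hZi i).aemeasurable).mp h1
    have hmgf : ∀ (t : ℝ), t < 1/2 → ∀ i, mgf (Y i) μ t = (Real.sqrt (1 - 2*t))⁻¹ := by
      intro t ht i
      have h2 : ∫ x, Real.exp (t * x^2) ∂(Measure.map (fun ω => Z ω i) μ)
          = (Real.sqrt (1 - 2*t))⁻¹ := by
        rw [hgauss i]; exact gauss_sq_integral ht
      rw [integral_map (hZi i).aemeasurable (hexpmeas t).aestronglyMeasurable] at h2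
      exact h2
    set s : Finset (Fin n) := Finset.univ.filter (fun i : Fin n => (i:ℕ) < d) with hs_def
    have hcard : s.card = d := by
      have h : s = Finset.map ⟨Fin.castLE hdn, Fin.castLE_injective hdn⟩ Finset.univ := by
        ext i
        simp only [hs_def, Finset.mem_filter, Finset.mem_univ, true_and, Finset.mem_map,
          Function.Embedding.coeFn_mk]
        constructor
        · intro h; exact ⟨⟨i, h⟩, rfl⟩
        · rintro ⟨j, -, rfl⟩; simpa using j.isLt
      rw [h, Finset.card_map, Finset.card_univ, Fintype.card_fin]
    -- Chernoff for X1
    obtain ⟨t1, ht1_def⟩ : ∃ t1 : ℝ, t1 = a/(2*(1+a)) := ⟨_, rfl⟩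
    have ht1nn : 0 ≤ t1 := by
      rw [ht1_def]; positivity
    have ht1lt : t1 < 1/2 := by
      rw [ht1_def, div_lt_iff₀ (by linarith)]; nlinarith
    have h1mt : 1 - 2*t1 = (1+a)⁻¹ := by
      have hmul : (1 - 2*t1) * (1+a) = 1 := by
        rw [ht1_def]; field_simp; ring
      exact eq_inv_of_mul_eq_one_left hmul
    have hmgf1 : mgf (∑ i ∈ s, Y i) μ t1 = (Real.sqrt (1+a))^d := by
      rw [hYindep.mgf_sum hYmeas s,
        Finset.prod_congr rfl (fun i _ => hmgf t1 ht1lt i), Finset.prod_const, hcard,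
        h1mt, Real.sqrt_inv, inv_inv]
    have hA := measure_ge_le_exp_mul_mgf (μ := μ) (X := ∑ i ∈ s, Y i) ((1+a)*d) ht1nn
      (hYindep.integrable_exp_mul_sum hYmeas (fun i _ => hint t1 ht1lt i))
    rw [hmgf1] at hA
    have hAbound : Real.exp (-t1 * ((1+a)*↑d)) * (Real.sqrt (1+a))^d
        ≤ Real.exp (-(ε/(1+ε))^2 * ↑d / 24) := by
      have e1 : Real.exp (-t1 * ((1+a)*↑d)) * (Real.sqrt (1+a))^d
          = (Real.exp (-(a/2)) * Real.sqrt (1+a))^d := by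
        rw [mul_pow, ← Real.exp_nat_mul]
        congr 2
        rw [ht1_def]
        field_simp
      rw [e1]
      calc (Real.exp (-(a/2)) * Real.sqrt (1+a))^d
          ≤ (Real.exp (-((ε/(1+ε))^2/24)))^d := by
            apply pow_le_pow_left₀ (by positivity) hscal1
        _ = Real.exp (-(ε/(1+ε))^2 * ↑d / 24) := by
            rw [← Real.exp_nat_mul]; congr 1; ring
    -- Chernoff for S
    obtain ⟨t2, ht2_def⟩ : ∃ t2 : ℝ, t2 = -(a/(2*(1-a))) := ⟨_, rfl⟩
    have ht2np : t2 ≤ 0 := by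
      rw [ht2_def]
      exact neg_nonpos_of_nonneg (div_nonneg ha0.le (by linarith))
    have ht2lt : t2 < 1/2 := lt_of_le_of_lt ht2np (by norm_num)
    have h1mt2 : 1 - 2*t2 = (1-a)⁻¹ := by
      have hmul : (1 - 2*t2) * (1-a) = 1 := by
        rw [ht2_def]; field_simp; ring
      exact eq_inv_of_mul_eq_one_left hmul
    have hmgf2 : mgf (∑ i, Y i) μ t2 = (Real.sqrt (1-a))^n := by
      rw [hYindep.mgf_sum hYmeas Finset.univ,
        Finset.prod_congr rfl (fun i _ => hmgf t2 ht2lt i), Finset.prod_const,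
        Finset.card_univ, Fintype.card_fin, h1mt2, Real.sqrt_inv, inv_inv]
    have hB := measure_le_le_exp_mul_mgf (μ := μ) (X := ∑ i, Y i) ((1-a)*n) ht2np
      (hYindep.integrable_exp_mul_sum hYmeas (fun i _ => hint t2 ht2lt i))
    rw [hmgf2] at hB
    have hBbound : Real.exp (-t2 * ((1-a)*↑n)) * (Real.sqrt (1-a))^n
        ≤ Real.exp (-(ε/(1+ε))^2 * ↑d / 24) := by
      have e1 : Real.exp (-t2 * ((1-a)*↑n)) * (Real.sqrt (1-a))^n
          = (Real.exp (a/2) * Real.sqrt (1-a))^n := by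
        rw [mul_pow, ← Real.exp_nat_mul]
        congr 2
        rw [ht2_def]
        field_simp
      rw [e1]
      have hbase : 0 ≤ Real.exp (a/2) * Real.sqrt (1-a) := by positivity
      calc (Real.exp (a/2) * Real.sqrt (1-a))^n
          ≤ (Real.exp (-((ε/(1+ε))^2/24)))^n := pow_le_pow_left₀ hbase hscal2 n
        _ ≤ (Real.exp (-((ε/(1+ε))^2/24)))^d := by
            apply pow_le_pow_of_le_one (Real.exp_nonneg _) _ hdn
            apply Real.exp_le_one_iff.mpr
            nlinarith [sq_nonneg (ε/(1+ε))]
        _ = Real.exp (-(ε/(1+ε))^2 * ↑d / 24) := by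
            rw [← Real.exp_nat_mul]; congr 1; ring
    -- inclusion
    have hid : (1+ε)*(1-a) = 1+a := by
      rw [ha_def]; field_simp; ring
    have hsub : {ω | (1 + ε) * d < ∑ i ∈ s, (U ω i) ^ 2}
        ⊆ {ω | (1+a)*↑d ≤ (∑ i ∈ s, Y i) ω} ∪ {ω | (∑ i, Y i) ω ≤ (1-a)*↑n} := by
      intro ω hω
      simp only [Set.mem_setOf_eq] at hω
      simp only [Set.mem_union, Set.mem_setOf_eq]
      by_contra hc
      push_neg at hc
      obtain ⟨hc1, hc2⟩ := hc
      rw [Finset.sum_apply] at hc1 hc2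
      have hSeq : ∑ i, Y i ω = ∑ j, (Z ω j)^2 := by simp [hY_def]
      rw [hSeq] at hc2
      have hSpos : 0 < ∑ j, (Z ω j)^2 :=
        lt_trans (mul_pos (by linarith : (0:ℝ) < 1 - a) hnpos) hc2
      have hUsq : ∀ i, (U ω i)^2 = ↑n * Y i ω / (∑ j, (Z ω j)^2) := by
        intro i
        rw [hU ω i, div_pow, mul_pow, Real.sq_sqrt hnpos.le, Real.sq_sqrt hSpos.le]
      have hsum : ∑ i ∈ s, (U ω i)^2 = ↑n * (∑ i ∈ s, Y i ω) / (∑ j, (Z ω j)^2) := by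
        rw [Finset.sum_congr rfl (fun i _ => hUsq i), ← Finset.sum_div, ← Finset.mul_sum]
      rw [hsum, lt_div_iff₀ hSpos] at hω
      have hX1nn : 0 ≤ ∑ i ∈ s, Y i ω :=
        Finset.sum_nonneg (fun i _ => by simp only [hY_def]; positivity)
      have p1 : ↑n * (∑ i ∈ s, Y i ω) < ↑n * ((1+a)*↑d) :=
        mul_lt_mul_of_pos_left hc1 hnpos
      have p2 : (1+ε)*↑d*((1-a)*↑n) < (1+ε)*↑d*(∑ j, (Z ω j)^2) :=
        mul_lt_mul_of_pos_left hc2 (mul_pos (by linarith : (0:ℝ) < 1+ε) hdpos)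
      have hid2 : ((1+ε)*(1-a))*(↑n*↑d) = (1+a)*(↑n*↑d) := by rw [hid]
      nlinarith [p1, p2, hid2, hω]
    have hAfin : μ {ω | (1+a)*↑d ≤ (∑ i ∈ s, Y i) ω}
        ≤ ENNReal.ofReal (Real.exp (-(ε/(1+ε))^2 * ↑d / 24)) := by
      rw [← ENNReal.ofReal_toReal (measure_ne_top μ _)]
      exact ENNReal.ofReal_le_ofReal (hA.trans hAbound)
    have hBfin : μ {ω | (∑ i, Y i) ω ≤ (1-a)*↑n}
        ≤ ENNReal.ofReal (Real.exp (-(ε/(1+ε))^2 * ↑d / 24)) := by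
      rw [← ENNReal.ofReal_toReal (measure_ne_top μ _)]
      exact ENNReal.ofReal_le_ofReal (hB.trans hBbound)
    calc μ {ω | (1 + ε) * d < ∑ i ∈ s, (U ω i) ^ 2}
        ≤ μ ({ω | (1+a)*↑d ≤ (∑ i ∈ s, Y i) ω} ∪ {ω | (∑ i, Y i) ω ≤ (1-a)*↑n}) :=
          measure_mono hsub
      _ ≤ μ {ω | (1+a)*↑d ≤ (∑ i ∈ s, Y i) ω} + μ {ω | (∑ i, Y i) ω ≤ (1-a)*↑n} :=
          measure_union_le _ _
      _ ≤ ENNReal.ofReal (Real.exp (-(ε/(1+ε))^2 * ↑d / 24))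
          + ENNReal.ofReal (Real.exp (-(ε/(1+ε))^2 * ↑d / 24)) := add_le_add hAfin hBfin
      _ = ENNReal.ofReal (2 * Real.exp (-(ε / (1 + ε)) ^ 2 * d / 24)) := by
          rw [← ENNReal.ofReal_add (Real.exp_nonneg _) (Real.exp_nonneg _)]
          congr 1
          ring
  · -- second inequality
    have hd0 : (0:ℝ) ≤ d := by positivity
    have h1 : ε/2 ≤ ε/(1+ε) :=
      div_le_div_of_nonneg_left hε0.le (by linarith) (by linarith)
    have h2 : (ε/2)^2 ≤ (ε/(1+ε))^2 := by
      apply pow_le_pow_left₀ (by positivity) h1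
    have h3 : -(ε/(1+ε))^2 * ↑d / 24 ≤ -ε^2 * ↑d / 96 := by
      nlinarith [mul_le_mul_of_nonneg_right h2 hd0]
    have := Real.exp_le_exp.mpr h3
    linarith
end
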